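/- Fix positive integers M, N, V with M ≥ 2, probabilities P_1, ..., P_N ≥ 0 summing to 1, and let ρ and ρ_V be as defined. Then the Monge–Kantorovich distance on P(Ω) satisfies d_P(ρ_V, ρ) ≤ 2·(M/V)^{1/4}. In particular ρ_V → ρ in the Monge–Kantorovich metric as V → ∞. -/

import Mathlib

open Metric MeasureTheory Filter Set TopologicalSpace
def CodeTree (M N : ℕ) := List (Fin M) → Fin N

lemma codetree_exists_disagree {M N : ℕ} {ω κ : CodeTree M N} (h : ω ≠ κ) :
    ∃ n : ℕ, ∃ i : List (Fin M), i.length = n ∧ ω i ≠ κ i := by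
  obtain ⟨i, hi⟩ := Function.ne_iff.mp h
  exact ⟨i.length, i, rfl, hi⟩

open scoped Classical in
noncomputable def treeDist {M N : ℕ} (ω κ : CodeTree M N) : ℝ :=
  if h : ω = κ then 0
  else (1 / (M : ℝ)) ^ Nat.find (codetree_exists_disagree h)

section
open scoped Classical

variable {M N : ℕ}

lemma treeDist_nonneg (a b : CodeTree M N) : 0 ≤ treeDist a b := by
  unfold treeDist
  by_cases h : a = b
  · simp [h]
  · rw [dif_neg h]; positivity

lemma treeDist_comm (ω κ : CodeTree M N) : treeDist ω κ = treeDist κ ω := by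
  unfold treeDist
  by_cases h : ω = κ
  · subst h; simp
  · rw [dif_neg h, dif_neg (Ne.symm h)]
    congr 1
    exact le_antisymm
      (Nat.find_mono fun n => fun ⟨i, hl, hne⟩ => ⟨i, hl, hne.symm⟩)
      (Nat.find_mono fun n => fun ⟨i, hl, hne⟩ => ⟨i, hl, hne.symm⟩)

lemma treeDist_triangle [NeZero M] (x y z : CodeTree M N) :
    treeDist x y ≤ treeDist x z + treeDist z y := by
  have hMpos : (0 : ℕ) < M := Nat.pos_of_ne_zero (NeZero.ne M)
  have hM : (0 : ℝ) < 1 / (M : ℝ) := by positivity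
  have hM1 : (1 / (M : ℝ)) ≤ 1 := by
    rw [div_le_one (by exact_mod_cast hMpos)]
    exact_mod_cast hMpos
  by_cases hxy : x = y
  · rw [show treeDist x y = 0 by rw [hxy]; simp [treeDist]]
    exact add_nonneg (treeDist_nonneg _ _) (treeDist_nonneg _ _)
  by_cases hxz : x = z
  · subst hxz
    rw [show treeDist x x = 0 by simp [treeDist], zero_add]
  by_cases hzy : z = y
  · subst hzy
    rw [show treeDist z z = 0 by simp [treeDist], add_zero]
  -- all distinct
  have key : Nat.find (codetree_exists_disagree hxz) ≤ Nat.find (codetree_exists_disagree hxy)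
      ∨ Nat.find (codetree_exists_disagree hzy) ≤ Nat.find (codetree_exists_disagree hxy) := by
    obtain ⟨i, hlen, hne⟩ := Nat.find_spec (codetree_exists_disagree hxy)
    by_cases h : x i = z i
    · right
      exact Nat.find_le ⟨i, hlen, by rw [← h]; exact hne⟩
    · left
      exact Nat.find_le ⟨i, hlen, h⟩
  rw [treeDist, dif_neg hxy, treeDist, dif_neg hxz, treeDist, dif_neg hzy]
  rcases key with h | h
  · calc (1 / (M:ℝ)) ^ Nat.find (codetree_exists_disagree hxy)
        ≤ (1 / (M:ℝ)) ^ Nat.find (codetree_exists_disagree hxz) :=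
          pow_le_pow_of_le_one (le_of_lt hM) hM1 h
      _ ≤ _ := le_add_of_nonneg_right (by positivity)
  · calc (1 / (M:ℝ)) ^ Nat.find (codetree_exists_disagree hxy)
        ≤ (1 / (M:ℝ)) ^ Nat.find (codetree_exists_disagree hzy) :=
          pow_le_pow_of_le_one (le_of_lt hM) hM1 h
      _ ≤ _ := le_add_of_nonneg_left (by positivity)

lemma treeDist_eq_zero [NeZero M] {x y : CodeTree M N} (h : treeDist x y = 0) : x = y := by
  by_contra hne
  have hMpos : (0 : ℕ) < M := Nat.pos_of_ne_zero (NeZero.ne M)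
  have hM : (0 : ℝ) < 1 / (M : ℝ) := by positivity
  rw [treeDist, dif_neg hne] at h
  exact (pow_pos hM _).ne' h

end

noncomputable instance {M N : ℕ} [NeZero M] : MetricSpace (CodeTree M N) where
  dist := treeDist
  dist_self := fun ω => by simp [treeDist]
  dist_comm := treeDist_comm
  dist_triangle := fun a b c => treeDist_triangle a c b
  eq_of_dist_eq_zero := treeDist_eq_zero

noncomputable instance {M N : ℕ} [NeZero M] : MeasurableSpace (CodeTree M N) := borel _
instance {M N : ℕ} [NeZero M] : BorelSpace (CodeTree M N) := ⟨rfl⟩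

/-- The index set `A = ({1,…,N} × {1,…,V}^M)^V`; `(a v).1` is the IFS number `n_v`
and `(a v).2 m` is the limb label `v_{v,m}`. -/
abbrev IdxA (M N V : ℕ) := Fin V → Fin N × (Fin M → Fin V)

/-- The shift `ξ_n : Ω^M → Ω`: bottom node labelled `n`, attached to the `M` given trees. -/
def xi {M N : ℕ} (n : Fin N) (ω : Fin M → CodeTree M N) : CodeTree M N :=
  fun i => match i with
  | [] => n
  | m :: j => ω m j

/-- The map `η^a : Ω^V → Ω^V`. -/
def eta {M N V : ℕ} (a : IdxA M N V) (ω : Fin V → CodeTree M N) : Fin V → CodeTree M N :=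
  fun v => xi (a v).1 fun m => ω ((a v).2 m)

/-- The probability `ρ([τ]) = ∏_{|i| ≤ k} P_{τ(i)}` of the level-`k` cylinder set of a
code tree `τ`, under i.i.d. node labels with `Pr(label = n) = P_n`. -/
noncomputable def cylProb {M N : ℕ} (P : Fin N → NNReal) : ℕ → CodeTree M N → ENNReal
  | 0, τ => (P (τ []) : ENNReal)
  | k + 1, τ => (P (τ []) : ENNReal) * ∏ m : Fin M, cylProb P k (fun j => τ (m :: j))

/-- The probability `P^a = P_{n₁}⋯P_{n_V} / V^{MV}` attached to the map `η^a`. -/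
noncomputable def probA {M N V : ℕ} (P : Fin N → NNReal) (a : IdxA M N V) : ENNReal :=
  (∏ v : Fin V, (P ((a v).1) : ENNReal)) / (V : ENNReal) ^ (M * V)

/-- The Monge–Kantorovich metric on measures. -/
noncomputable def MKdist {Y : Type*} [MeasurableSpace Y] [MetricSpace Y]
    (μ ν : Measure Y) : ℝ :=
  ⨆ f : {g : Y → ℝ // LipschitzWith 1 g}, ((∫ x, f.1 x ∂μ) - (∫ x, f.1 x ∂ν))

section Aux1
open scoped Classical

variable {M N : ℕ}

lemma dist_eq_treeDist [NeZero M] (ω κ : CodeTree M N) : dist ω κ = treeDist ω κ := rfl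

lemma oneDivM_pos [NeZero M] : (0:ℝ) < 1 / (M:ℝ) := by
  have : (0:ℝ) < M := by exact_mod_cast Nat.pos_of_ne_zero (NeZero.ne M)
  positivity

lemma oneDivM_le_one [NeZero M] : (1:ℝ) / (M:ℝ) ≤ 1 := by
  have h : (0:ℝ) < M := by exact_mod_cast Nat.pos_of_ne_zero (NeZero.ne M)
  rw [div_le_one h]
  exact_mod_cast Nat.one_le_iff_ne_zero.mpr (NeZero.ne M)

lemma treeDist_le_pow [NeZero M] {ω κ : CodeTree M N} {k : ℕ}
    (h : ∀ i : List (Fin M), i.length ≤ k → ω i = κ i) :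
    treeDist ω κ ≤ (1 / (M:ℝ)) ^ (k+1) := by
  unfold treeDist
  by_cases he : ω = κ
  · rw [dif_pos he]
    positivity
  · rw [dif_neg he]
    apply pow_le_pow_of_le_one oneDivM_pos.le oneDivM_le_one
    by_contra hlt
    push_neg at hlt
    obtain ⟨i, hlen, hne⟩ := Nat.find_spec (codetree_exists_disagree he)
    exact hne (h i (by omega))

lemma treeDist_apply_eq [NeZero M] {ω κ : CodeTree M N} {k : ℕ}
    (h : treeDist ω κ < (1 / (M:ℝ)) ^ k) :
    ∀ i : List (Fin M), i.length ≤ k → ω i = κ i := by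
  intro i hi
  by_contra hne
  have hωκ : ω ≠ κ := fun e => hne (by rw [e])
  have hfind : Nat.find (codetree_exists_disagree hωκ) ≤ i.length := Nat.find_le ⟨i, rfl, hne⟩
  rw [treeDist, dif_neg hωκ] at h
  exact absurd (pow_le_pow_of_le_one oneDivM_pos.le oneDivM_le_one (hfind.trans hi))
    (not_le.mpr h)

/-- the level-`k` cylinder set -/
def cyl (M N k : ℕ) (τ : CodeTree M N) : Set (CodeTree M N) :=
  {σ : CodeTree M N | ∀ i : List (Fin M), i.length ≤ k → σ i = τ i}

lemma pow_succ_lt_pow [NeZero M] (hM : 2 ≤ M) (k : ℕ) :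
    (1/(M:ℝ))^(k+1) < (1/(M:ℝ))^k := by
  have h1 : (1:ℝ) < M := by exact_mod_cast hM
  apply pow_lt_pow_right_of_lt_one₀ oneDivM_pos _ (Nat.lt_succ_self k)
  rw [div_lt_one (by linarith)]
  exact h1

lemma cyl_eq_ball [NeZero M] (hM : 2 ≤ M) (k : ℕ) (τ : CodeTree M N) :
    cyl M N k τ = Metric.ball τ ((1/(M:ℝ))^k) := by
  ext σ
  rw [Metric.mem_ball, dist_eq_treeDist]
  constructor
  · intro hσ
    exact lt_of_le_of_lt (treeDist_le_pow hσ) (pow_succ_lt_pow hM k)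
  · intro hσ
    exact treeDist_apply_eq hσ

lemma measurableSet_cyl [NeZero M] (hM : 2 ≤ M) (k : ℕ) (τ : CodeTree M N) :
    MeasurableSet (cyl M N k τ) := by
  rw [cyl_eq_ball hM]
  exact Metric.isOpen_ball.measurableSet

/-- finset of lists of a given length -/
def listsLen (M : ℕ) : ℕ → Finset (List (Fin M))
  | 0 => {[]}
  | l+1 => (Finset.univ ×ˢ listsLen M l).image fun p => p.1 :: p.2

lemma mem_listsLen (M : ℕ) : ∀ (l : ℕ) (i : List (Fin M)), i ∈ listsLen M l ↔ i.length = l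
  | 0, i => by cases i <;> simp [listsLen]
  | l+1, i => by
    cases i with
    | nil => simp [listsLen]
    | cons m j =>
      simp [listsLen, mem_listsLen M l j, eq_comm]

lemma card_listsLen (M : ℕ) : ∀ l : ℕ, (listsLen M l).card = M ^ l
  | 0 => by simp [listsLen]
  | l+1 => by
    rw [listsLen, Finset.card_image_of_injective _ (fun p q h => ?_), Finset.card_product,
      Finset.card_univ, Fintype.card_fin, card_listsLen M l, pow_succ, mul_comm]
    exact Prod.ext (by injection h) (by injection h)

/-- finset of lists of length at most `k` -/
def listsLe (M k : ℕ) : Finset (List (Fin M)) := (Finset.range (k+1)).biUnion (listsLen M)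

lemma mem_listsLe (M k : ℕ) (i : List (Fin M)) : i ∈ listsLe M k ↔ i.length ≤ k := by
  simp only [listsLe, Finset.mem_biUnion, Finset.mem_range, mem_listsLen]
  constructor
  · rintro ⟨l, hl, rfl⟩; omega
  · intro h; exact ⟨i.length, by omega, rfl⟩

/-- nodes of the tree up to level `k` -/
abbrev NodeT (M k : ℕ) := {i : List (Fin M) // i.length ≤ k}

instance (M k : ℕ) : Fintype (NodeT M k) :=
  Fintype.subtype (listsLe M k) (mem_listsLe M k)

/-- truncation of a code tree at level `k` -/
def truncK (k : ℕ) (ω : CodeTree M N) : CodeTree M N := fun i => ω (i.take k)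

lemma truncK_agree {k : ℕ} (ω : CodeTree M N) (i : List (Fin M)) (hi : i.length ≤ k) :
    truncK k ω i = ω i := by
  unfold truncK
  rw [List.take_of_length_le hi]

lemma dist_truncK [NeZero M] (k : ℕ) (ω : CodeTree M N) :
    dist (truncK k ω) ω ≤ (1/(M:ℝ))^(k+1) :=
  treeDist_le_pow fun i hi => truncK_agree ω i hi

lemma finite_range_truncK (k : ℕ) : (Set.range (truncK (M := M) (N := N) k)).Finite := by
  have : Set.range (truncK (M := M) (N := N) k) ⊆
      Set.range (fun (p : NodeT M k → Fin N) (i : List (Fin M)) =>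
        p ⟨i.take k, le_trans (by rw [List.length_take]; omega) le_rfl⟩) := by
    rintro σ ⟨ω, rfl⟩
    exact ⟨fun n => ω n.1, rfl⟩
  exact Set.Finite.subset (Set.finite_range _) this

instance secondCountable_codetree [NeZero M] [Fact (2 ≤ M)] :
    SecondCountableTopology (CodeTree M N) := by
  haveI : TopologicalSpace.SeparableSpace (CodeTree M N) := by
    refine ⟨⟨⋃ k, Set.range (truncK (M := M) (N := N) k), ?_, ?_⟩⟩
    · exact Set.countable_iUnion fun k => (finite_range_truncK k).countable
    · rw [Metric.dense_iff]
      intro x r hr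
      have hM : 2 ≤ M := Fact.out
      obtain ⟨k, hk⟩ : ∃ k : ℕ, (1/(M:ℝ))^k < r := by
        apply exists_pow_lt_of_lt_one hr
        rw [div_lt_one (by exact_mod_cast Nat.pos_of_ne_zero (NeZero.ne M))]
        exact_mod_cast lt_of_lt_of_le one_lt_two hM
      refine ⟨truncK k x, Metric.mem_ball.mpr ?_, Set.mem_iUnion.mpr ⟨k, ⟨x, rfl⟩⟩⟩
      calc dist (truncK k x) x ≤ (1/(M:ℝ))^(k+1) := dist_truncK k x
      _ < (1/(M:ℝ))^k := pow_succ_lt_pow hM k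
      _ < r := hk
  exact UniformSpace.secondCountable_of_separable _

lemma dist_eta_coord_le [NeZero M] {V : ℕ} (a : IdxA M N V) (ω κ : Fin V → CodeTree M N)
    (v : Fin V) : dist (eta a ω v) (eta a κ v) ≤ dist ω κ := by
  rw [dist_eq_treeDist]
  unfold treeDist
  by_cases he : eta a ω v = eta a κ v
  · rw [dif_pos he]; exact dist_nonneg
  · rw [dif_neg he]
    obtain ⟨i, hlen, hne⟩ := Nat.find_spec (codetree_exists_disagree he)
    match i, hlen with
    | [], hlen => exact absurd rfl hne
    | (m :: j), hlen =>
      have hj : (eta a ω v) (m :: j) = ω ((a v).2 m) j := rfl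
      have hj' : (eta a κ v) (m :: j) = κ ((a v).2 m) j := rfl
      rw [hj, hj'] at hne
      have hne2 : ω ((a v).2 m) ≠ κ ((a v).2 m) := fun e => hne (by rw [e])
      have h1 : (1/(M:ℝ)) ^ Nat.find (codetree_exists_disagree he) ≤
          (1/(M:ℝ)) ^ j.length := by
        apply pow_le_pow_of_le_one oneDivM_pos.le oneDivM_le_one
        rw [← hlen, List.length_cons]
        omega
      have h2 : (1/(M:ℝ)) ^ j.length ≤ treeDist (ω ((a v).2 m)) (κ ((a v).2 m)) := by
        rw [treeDist, dif_neg hne2]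
        apply pow_le_pow_of_le_one oneDivM_pos.le oneDivM_le_one
        exact Nat.find_le ⟨j, rfl, hne⟩
      calc (1/(M:ℝ)) ^ Nat.find (codetree_exists_disagree he) ≤
          treeDist (ω ((a v).2 m)) (κ ((a v).2 m)) := le_trans h1 h2
      _ = dist (ω ((a v).2 m)) (κ ((a v).2 m)) := rfl
      _ ≤ dist ω κ := dist_le_pi_dist ω κ _

lemma lipschitz_eta [NeZero M] {V : ℕ} [NeZero V] (a : IdxA M N V) :
    LipschitzWith 1 (eta a) := by
  apply LipschitzWith.of_dist_le_mul
  intro ω κ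
  simp only [NNReal.coe_one, one_mul]
  rw [dist_pi_le_iff dist_nonneg]
  intro v
  exact dist_eta_coord_le a ω κ v

lemma measurable_eta [NeZero M] [Fact (2 ≤ M)] {V : ℕ} [NeZero V] (a : IdxA M N V) :
    Measurable (eta a) :=
  (lipschitz_eta a).continuous.measurable

end Aux1

section Aux2

variable {M N V : ℕ}

/-- buffer dynamics -/
def bufN (Vs : ℕ → Fin V → Fin M → Fin V) : ℕ → Fin V → List (Fin M) → Fin V
  | _, v, [] => v
  | t, v, (m :: j) => bufN Vs (t+1) (Vs t v m) j

lemma bufN_append {Vs : ℕ → Fin V → Fin M → Fin V} (j : List (Fin M)) :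
    ∀ (i : List (Fin M)) (t : ℕ) (v : Fin V),
    bufN Vs t v (i ++ j) = bufN Vs (t + i.length) (bufN Vs t v i) j
  | [], t, v => by simp [bufN]
  | (m :: i'), t, v => by
    have hn : t + (m :: i').length = t + 1 + i'.length := by
      simp only [List.length_cons]
      omega
    show bufN Vs (t+1) (Vs t v m) (i' ++ j)
        = bufN Vs (t + (m :: i').length) (bufN Vs (t+1) (Vs t v m) i') j
    rw [hn, bufN_append j i' (t+1)]

lemma bufN_concat {Vs : ℕ → Fin V → Fin M → Fin V} (i : List (Fin M)) (m : Fin M)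
    (t : ℕ) (v : Fin V) :
    bufN Vs t v (i ++ [m]) = Vs (t + i.length) (bufN Vs t v i) m := by
  rw [bufN_append]
  rfl

lemma bufN_congr {Vs Vs' : ℕ → Fin V → Fin M → Fin V} :
    ∀ (i : List (Fin M)) (t : ℕ) (v : Fin V),
    (∀ t', t ≤ t' → t' < t + i.length → Vs t' = Vs' t') →
    bufN Vs t v i = bufN Vs' t v i
  | [], t, v, _ => rfl
  | (m :: j), t, v, h => by
    simp only [bufN]
    rw [h t le_rfl (by simp only [List.length_cons]; omega)]
    exact bufN_congr j (t+1) _ fun t' h1 h2 => h t' (by omega) (by simp only [List.length_cons]; omega)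

/-- the label pattern of the composite map -/
def patE (e : ℕ → IdxA M N V) (v : Fin V) (i : List (Fin M)) : Fin N :=
  ((e i.length) (bufN (fun t u m => ((e t) u).2 m) 0 v i)).1

/-- composite of the maps `η^{e 0} ∘ η^{e 1} ∘ ⋯` -/
def etaCompN (e : ℕ → IdxA M N V) : ℕ → (Fin V → CodeTree M N) → (Fin V → CodeTree M N)
  | 0 => id
  | s+1 => fun ω => eta (e 0) (etaCompN (fun t => e (t+1)) s ω)

lemma bufN_shift' (e : ℕ → IdxA M N V) :
    ∀ (i : List (Fin M)) (t : ℕ) (v : Fin V),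
    bufN (fun t' u m => ((e (t'+1)) u).2 m) t v i
      = bufN (fun t' u m => ((e t') u).2 m) (t+1) v i
  | [], t, v => rfl
  | (m :: j), t, v => by
    simp only [bufN]
    exact bufN_shift' e j (t+1) _

lemma etaCompN_apply : ∀ (s : ℕ) (e : ℕ → IdxA M N V) (ω : Fin V → CodeTree M N)
    (v : Fin V) (i : List (Fin M)), i.length < s → (etaCompN e s ω v) i = patE e v i
  | s+1, e, ω, v, [], _ => rfl
  | s+1, e, ω, v, (m :: j), h => by
    have hj : j.length < s := by
      simp only [List.length_cons] at h
      omega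
    have h0 : (etaCompN e (s+1) ω v) (m :: j)
        = (etaCompN (fun t => e (t+1)) s ω) (((e 0) v).2 m) j := rfl
    rw [h0, etaCompN_apply s _ ω _ j hj]
    unfold patE
    simp only [List.length_cons, bufN]
    rw [bufN_shift' e j]

/-- finite composite -/
def etaCompF : (s : ℕ) → (Fin s → IdxA M N V) → (Fin V → CodeTree M N) → (Fin V → CodeTree M N)
  | 0, _ => id
  | s+1, e => fun ω => eta (e 0) (etaCompF s (Fin.tail e) ω)

/-- extension of a finite family by junk -/
def extE [NeZero N] [NeZero V] {s : ℕ} (e : Fin s → IdxA M N V) : ℕ → IdxA M N V :=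
  fun t => if h : t < s then e ⟨t, h⟩ else fun _ => (default, fun _ => default)

lemma etaCompN_congr : ∀ (s : ℕ) (e e' : ℕ → IdxA M N V),
    (∀ t, t < s → e t = e' t) → etaCompN e s = etaCompN e' s
  | 0, _, _, _ => rfl
  | s+1, e, e', h => by
    funext ω
    show eta (e 0) (etaCompN (fun t => e (t+1)) s ω)
        = eta (e' 0) (etaCompN (fun t => e' (t+1)) s ω)
    rw [h 0 (by omega), etaCompN_congr s (fun t => e (t+1)) (fun t => e' (t+1))
      (fun t ht => h (t+1) (by omega))]

lemma etaCompF_eq [NeZero N] [NeZero V] :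
    ∀ (s : ℕ) (e : Fin s → IdxA M N V), etaCompF s e = etaCompN (extE e) s
  | 0, e => rfl
  | s+1, e => by
    funext ω
    show eta (e 0) (etaCompF s (Fin.tail e) ω) = eta (extE e 0) (etaCompN (fun t => extE e (t+1)) s ω)
    have h1 : extE e 0 = e 0 := by
      unfold extE
      rw [dif_pos (Nat.succ_pos s)]
      rfl
    have h2 : etaCompN (fun t => extE e (t+1)) s = etaCompN (extE (Fin.tail e)) s := by
      apply etaCompN_congr
      intro t ht
      unfold extE
      rw [dif_pos (by omega : t + 1 < s + 1), dif_pos ht]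
      rfl
    rw [h1, h2, etaCompF_eq s (Fin.tail e)]

lemma measurable_etaCompF [NeZero M] [Fact (2 ≤ M)] [NeZero V] :
    ∀ (s : ℕ) (e : Fin s → IdxA M N V), Measurable (etaCompF s e)
  | 0, _ => measurable_id
  | s+1, e => (measurable_eta (e 0)).comp (measurable_etaCompF s (Fin.tail e))

end Aux2

section Aux3
open scoped Classical

/-- real indicator of a proposition -/
noncomputable def ind (p : Prop) : ℝ := if p then 1 else 0

lemma ind_nonneg (p : Prop) : 0 ≤ ind p := by
  unfold ind; split <;> norm_num

lemma ind_le_one (p : Prop) : ind p ≤ 1 := by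
  unfold ind; split <;> norm_num

lemma ind_true {p : Prop} (h : p) : ind p = 1 := if_pos h

lemma ind_false {p : Prop} (h : ¬ p) : ind p = 0 := if_neg h

lemma ind_congr {p q : Prop} (h : p ↔ q) : ind p = ind q := by
  unfold ind
  exact if_congr h rfl rfl

lemma ind_mono {p q : Prop} (h : p → q) : ind p ≤ ind q := by
  unfold ind
  split
  · rw [if_pos (h (by assumption))]
  · split <;> norm_num

lemma ind_forall_prod {ι : Type*} [Fintype ι] (Q : ι → Prop) :
    ind (∀ j, Q j) = ∏ j, ind (Q j) := by
  by_cases h : ∀ j, Q j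
  · rw [ind_true h, Finset.prod_eq_one fun j _ => ind_true (h j)]
  · push_neg at h
    obtain ⟨j0, hj0⟩ := h
    rw [ind_false (fun hall => hj0 (hall j0))]
    exact (Finset.prod_eq_zero (Finset.mem_univ j0) (ind_false hj0)).symm

lemma ind_exists_le_sum {ι : Type*} {s : Finset ι} {Q : ι → Prop} {P : Prop}
    (h : P → ∃ j ∈ s, Q j) : ind P ≤ ∑ j ∈ s, ind (Q j) := by
  by_cases hP : P
  · obtain ⟨j0, hj0, hQ⟩ := h hP
    rw [ind_true hP]
    calc (1:ℝ) = ind (Q j0) := (ind_true hQ).symm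
    _ ≤ ∑ j ∈ s, ind (Q j) := Finset.single_le_sum (fun j _ => ind_nonneg _) hj0
  · rw [ind_false hP]
    exact Finset.sum_nonneg fun j _ => ind_nonneg _

lemma sum_eq_ind {α : Type*} [Fintype α] [DecidableEq α] (a b : α) :
    ∑ u : α, ind (a = u ∧ b = u) = ind (a = b) := by
  by_cases hab : a = b
  · subst hab
    rw [ind_true rfl]
    have h1 : ∀ u : α, ind (a = u ∧ a = u) = ind (a = u) :=
      fun u => ind_congr (by tauto)
    simp only [h1]
    rw [Finset.sum_eq_single a (fun u _ hu => ind_false fun h => hu h.symm) 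
      (fun h => absurd (Finset.mem_univ a) h), ind_true rfl]
  · rw [ind_false hab, Finset.sum_eq_zero]
    intro u _
    exact ind_false fun ⟨h1, h2⟩ => hab (h1.trans h2.symm)

/-- iid selection lemma: the probability that iid coordinates take prescribed values
at an injective selection of positions is the product of the probabilities. -/
lemma iid_selection {ι γ : Type*} [Fintype ι] [DecidableEq ι] [Fintype γ]
    {n : ℕ} (q : Fin n → ℝ) (hq : ∑ y, q y = 1)
    (s : γ → ι) (hs : Function.Injective s) (c : γ → Fin n) :
    ∑ x : ι → Fin n, (∏ j, q (x j)) * ind (∀ i, x (s i) = c i) = ∏ i, q (c i) := by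
  have step1 : ∀ x : ι → Fin n,
      (∏ j, q (x j)) * ind (∀ i, x (s i) = c i)
        = ∏ j, (q (x j) * ind (∀ i, s i = j → x j = c i)) := by
    intro x
    rw [Finset.prod_mul_distrib]
    congr 1
    rw [ind_congr (show (∀ i, x (s i) = c i) ↔ (∀ j, ∀ i, s i = j → x j = c i) by
      constructor
      · rintro h j i rfl; exact h i
      · intro h i; exact h (s i) i rfl)]
    exact ind_forall_prod _
  rw [Finset.sum_congr rfl fun x _ => step1 x,
    (Fintype.prod_sum (fun j y => q y * ind (∀ i, s i = j → y = c i))).symm]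
  have hpick : ∀ b : Fin n, (∑ y, q y * ind (y = b)) = q b := by
    intro b
    rw [Finset.sum_eq_single b (fun y _ hy => by rw [ind_false hy, mul_zero])
      (fun h => absurd (Finset.mem_univ b) h), ind_true rfl, mul_one]
  have hoff : ∀ j ∈ Finset.univ, j ∉ Finset.univ.image s →
      (∑ y, q y * ind (∀ i, s i = j → y = c i)) = 1 := by
    intro j _ hj
    have h1 : ∀ y : Fin n, ind (∀ i, s i = j → y = c i) = 1 := by
      intro y
      refine ind_true fun i hi => absurd ?_ hj
      rw [← hi]
      exact Finset.mem_image_of_mem s (Finset.mem_univ i)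
    simp only [h1, mul_one]
    exact hq
  rw [← Finset.prod_subset (Finset.subset_univ (Finset.univ.image s)) hoff,
    Finset.prod_image (fun i _ i' _ h => hs h)]
  apply Finset.prod_congr rfl
  intro i _
  have h2 : ∀ y : Fin n, ind (∀ i', s i' = s i → y = c i') = ind (y = c i) := by
    intro y
    refine ind_congr ⟨fun h => h i rfl, ?_⟩
    rintro rfl i' hi'
    rw [hs hi']
  simp only [h2]
  exact hpick (c i)

end Aux3

section Aux4
open scoped Classical

lemma sum_const_unif {γ : Type*} [Fintype γ] [DecidableEq γ] {V : ℕ} [NeZero V] :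
    ∑ g : γ → Fin V, ∏ _x : γ, (1/(V:ℝ)) = 1 := by
  have hV : (V:ℝ) ≠ 0 := by exact_mod_cast NeZero.ne V
  have h1 : ∑ _y : Fin V, (1/(V:ℝ)) = 1 := by
    rw [Finset.sum_const, Finset.card_univ, Fintype.card_fin, nsmul_eq_mul]
    field_simp
  calc ∑ g : γ → Fin V, ∏ _x : γ, (1/(V:ℝ))
      = ∏ _x : γ, ∑ _y : Fin V, (1/(V:ℝ)) :=
        (Fintype.prod_sum (fun (_ : γ) (_ : Fin V) => (1/(V:ℝ)))).symm
    _ = 1 := by rw [Finset.prod_congr rfl fun x _ => h1, Finset.prod_const, one_pow]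

lemma sum_const_unif2 {γ δ : Type*} [Fintype γ] [DecidableEq γ] [Fintype δ] [DecidableEq δ]
    {V : ℕ} [NeZero V] :
    ∑ g : γ → δ → Fin V, ∏ _x : γ, ∏ _y : δ, (1/(V:ℝ)) = 1 := by
  calc ∑ g : γ → δ → Fin V, ∏ _x : γ, ∏ _y : δ, (1/(V:ℝ))
      = ∏ _x : γ, ∑ _h : δ → Fin V, ∏ _y : δ, (1/(V:ℝ)) :=
        (Fintype.prod_sum (fun (_ : γ) (h : δ → Fin V) => ∏ _y : δ, (1/(V:ℝ)))).symm
    _ = 1 := by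
        rw [Finset.prod_congr rfl fun x _ => sum_const_unif, Finset.prod_const, one_pow]

lemma unif_pair {κ : Type*} [Fintype κ] [DecidableEq κ] {V : ℕ} [NeZero V]
    {j1 j2 : κ} (h12 : j1 ≠ j2) :
    ∑ h : κ → Fin V, (∏ _j : κ, (1/(V:ℝ))) * ind (h j1 = h j2) = 1 / V := by
  have hV : (V:ℝ) ≠ 0 := by exact_mod_cast NeZero.ne V
  have key : ∀ h : κ → Fin V, ind (h j1 = h j2) = ∑ u : Fin V, ind (h j1 = u ∧ h j2 = u) :=
    fun h => (sum_eq_ind (h j1) (h j2)).symm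
  simp only [key, Finset.mul_sum]
  rw [Finset.sum_comm]
  have inner : ∀ u : Fin V,
      (∑ h : κ → Fin V, (∏ _j : κ, (1/(V:ℝ))) * ind (h j1 = u ∧ h j2 = u))
        = (1/(V:ℝ)) * (1/(V:ℝ)) := by
    intro u
    have hq : ∑ _y : Fin V, (1/(V:ℝ)) = 1 := by
      rw [Finset.sum_const, Finset.card_univ, Fintype.card_fin, nsmul_eq_mul]
      field_simp
    have hs : Function.Injective (fun b : Bool => cond b j1 j2) := by
      intro b b' hbb
      cases b <;> cases b' <;> simp only [cond] at hbb <;>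
        first | rfl | exact absurd hbb h12.symm | exact absurd hbb h12
    have H := iid_selection (ι := κ) (γ := Bool) (fun _ : Fin V => 1/(V:ℝ)) hq
      (fun b : Bool => cond b j1 j2) hs (fun _ => u)
    have hiff : ∀ h : κ → Fin V,
        ind (∀ b : Bool, h (cond b j1 j2) = u) = ind (h j1 = u ∧ h j2 = u) := by
      intro h
      exact ind_congr ⟨fun hh => ⟨hh true, hh false⟩, fun ⟨h1, h2⟩ b => by cases b <;> simpa⟩
    simp only [hiff] at H
    rw [H]
    rw [Fintype.prod_bool]
  rw [Finset.sum_congr rfl fun u _ => inner u, Finset.sum_const, Finset.card_univ,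
    Fintype.card_fin, nsmul_eq_mul]
  field_simp

/-- conditional pair-collision bound for uniform coordinates -/
lemma pair_core {κ : Type*} [Fintype κ] [DecidableEq κ] {V : ℕ} [NeZero V] {T : ℕ}
    (t0 : Fin T) (C : ({t : Fin T // t ≠ t0} → κ → Fin V) → Prop)
    (β β' : ({t : Fin T // t ≠ t0} → κ → Fin V) → κ)
    (hββ' : ∀ r, C r → β r ≠ β' r) :
    ∑ W : Fin T → κ → Fin V,
      (∏ _t : Fin T, ∏ _p : κ, (1/(V:ℝ)))
        * ind (C (fun t => W t.1) ∧ W t0 (β (fun t => W t.1)) = W t0 (β' (fun t => W t.1)))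
      ≤ 1/V := by
  have hV : (0:ℝ) < V := by
    have := NeZero.ne V
    positivity
  set c : ℝ := ∏ _p : κ, (1/(V:ℝ)) with hc
  have hc0 : 0 ≤ c := Finset.prod_nonneg fun _ _ => by positivity
  set E := Equiv.funSplitAt t0 (κ → Fin V) with hE
  rw [← Equiv.sum_comp E.symm]
  rw [Fintype.sum_prod_type]
  have hrestr : ∀ (h : κ → Fin V) (r : {t : Fin T // t ≠ t0} → κ → Fin V),
      (fun t : {t : Fin T // t ≠ t0} => (E.symm (h, r)) t.1) = r := by
    intro h r
    funext t
    simp [hE, Equiv.funSplitAt, t.2]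
  have happ : ∀ (h : κ → Fin V) (r : {t : Fin T // t ≠ t0} → κ → Fin V),
      (E.symm (h, r)) t0 = h := by
    intro h r
    simp [hE, Equiv.funSplitAt]
  have hTpos : 0 < T := t0.pos
  have hwt : (∏ _t : Fin T, ∏ _p : κ, (1/(V:ℝ))) = c * c ^ (T-1) := by
    rw [Finset.prod_const, Finset.card_univ, Fintype.card_fin, ← hc]
    rw [← pow_succ']
    congr 1
    omega
  calc ∑ h : κ → Fin V, ∑ r : {t : Fin T // t ≠ t0} → κ → Fin V,
        (∏ _t : Fin T, ∏ _p : κ, (1/(V:ℝ)))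
          * ind (C (fun t => (E.symm (h,r)) t.1)
            ∧ (E.symm (h,r)) t0 (β (fun t => (E.symm (h,r)) t.1))
              = (E.symm (h,r)) t0 (β' (fun t => (E.symm (h,r)) t.1)))
      = ∑ r : {t : Fin T // t ≠ t0} → κ → Fin V, ∑ h : κ → Fin V,
        (c^(T-1)) * (c * ind (C r ∧ h (β r) = h (β' r))) := by
        rw [Finset.sum_comm]
        apply Finset.sum_congr rfl
        intro r _
        apply Finset.sum_congr rfl
        intro h _
        rw [hrestr h r, happ h r, hwt]
        ring
    _ ≤ ∑ r : {t : Fin T // t ≠ t0} → κ → Fin V, (c^(T-1)) * (1/V) := by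
        apply Finset.sum_le_sum
        intro r _
        rw [← Finset.mul_sum]
        apply mul_le_mul_of_nonneg_left _ (pow_nonneg hc0 _)
        by_cases hCr : C r
        · have heq : ∀ h : κ → Fin V, ind (C r ∧ h (β r) = h (β' r)) = ind (h (β r) = h (β' r)) :=
            fun h => ind_congr (by tauto)
          simp only [heq]
          exact le_of_eq (unif_pair (hββ' r hCr))
        · have heq : ∀ h : κ → Fin V, ind (C r ∧ h (β r) = h (β' r)) = 0 :=
            fun h => ind_false (by tauto)
          simp only [heq, mul_zero, Finset.sum_const, smul_zero]
          positivity
    _ = (∑ r : {t : Fin T // t ≠ t0} → κ → Fin V, ∏ _x : {t : Fin T // t ≠ t0}, ∏ _p : κ, (1/(V:ℝ)))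
          * (1/V) := by
        rw [Finset.sum_mul]
        apply Finset.sum_congr rfl
        intro r _
        congr 1
        rw [Finset.prod_const, Finset.card_univ, ← hc]
        congr 1
        rw [Fintype.card_subtype_compl]
        simp
    _ = 1/V := by rw [sum_const_unif2, one_mul]

end Aux4

section Aux5
open scoped Classical

variable {M N V : ℕ}

/-- sample spaces -/
abbrev NsT (M N V k : ℕ) := Fin (k+1) → Fin V → Fin N
abbrev VsT (M V k : ℕ) := Fin (k+1) → (Fin V × Fin M) → Fin V
abbrev FT (M N k : ℕ) := NodeT M k → Fin N

/-- extension of the limb data -/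
def VsExt [NeZero V] {k : ℕ} (Vs : VsT M V k) : ℕ → Fin V → Fin M → Fin V :=
  fun t v m => if h : t < k+1 then Vs ⟨t, h⟩ (v, m) else 0

/-- the buffer used by node `i` in the first tree of the composite -/
def bufK [NeZero V] {k : ℕ} (Vs : VsT M V k) (i : List (Fin M)) : Fin V :=
  bufN (VsExt Vs) 0 0 i

/-- the label pattern determined by the node data `Ns` and the limb data `Vs` -/
def patK [NeZero V] {k : ℕ} (Ns : NsT M N V k) (Vs : VsT M V k) (i : NodeT M k) : Fin N :=
  Ns ⟨i.1.length, Nat.lt_succ_of_le i.2⟩ (bufK Vs i.1)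

/-- representative code tree of a level-`k` pattern -/
def repP {k : ℕ} (c : FT M N k) : CodeTree M N :=
  fun i => c ⟨i.take k, by rw [List.length_take]; omega⟩

lemma repP_agree {k : ℕ} (c : FT M N k) (i : List (Fin M)) (hi : i.length ≤ k) :
    repP c i = c ⟨i, hi⟩ := by
  unfold repP
  congr 1
  exact Subtype.ext (List.take_of_length_le hi)

lemma dist_repP_le [NeZero M] {k : ℕ} (c c' : FT M N k) (L : ℕ)
    (hag : ∀ i : NodeT M k, i.1.length ≤ L → c i = c' i) :
    dist (repP c) (repP c') ≤ (1/(M:ℝ))^(L+1) := by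
  rw [dist_eq_treeDist]
  apply treeDist_le_pow
  intro i hi
  unfold repP
  apply hag
  simp only [List.length_take]
  omega

lemma bufK_congr [NeZero V] {k : ℕ} {Vs Vs' : VsT M V k} (i : List (Fin M))
    (h : ∀ t : Fin (k+1), (t : ℕ) < i.length → Vs t = Vs' t) :
    bufK Vs i = bufK Vs' i := by
  unfold bufK
  apply bufN_congr
  intro t' _ ht2
  funext v m
  unfold VsExt
  by_cases hlt : t' < k+1
  · rw [dif_pos hlt, dif_pos hlt, h ⟨t', hlt⟩ (by simpa using ht2)]
  · rw [dif_neg hlt, dif_neg hlt]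

lemma bufK_concat [NeZero V] {k : ℕ} (Vs : VsT M V k) (p : List (Fin M)) (m : Fin M)
    (hp : p.length < k+1) :
    bufK Vs (p ++ [m]) = Vs ⟨p.length, hp⟩ (bufK Vs p, m) := by
  unfold bufK
  rw [bufN_concat]
  unfold VsExt
  rw [zero_add, dif_pos hp]

/-- collision of buffers at level `l` -/
def Coll [NeZero V] (k : ℕ) (Vs : VsT M V k) (l : ℕ) : Prop :=
  ∃ p ∈ listsLen M l, ∃ q ∈ listsLen M l, p ≠ q ∧ bufK Vs p = bufK Vs q

/-- first collision at level `l` -/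
def FC [NeZero V] (k : ℕ) (Vs : VsT M V k) (l : ℕ) : Prop :=
  Coll k Vs l ∧ ∀ l' < l, ¬ Coll k Vs l'

lemma not_coll_zero [NeZero V] (k : ℕ) (Vs : VsT M V k) : ¬ Coll k Vs 0 := by
  rintro ⟨p, hp, q, hq, hpq, -⟩
  rw [mem_listsLen] at hp hq
  apply hpq
  rw [List.length_eq_zero_iff] at hp hq
  rw [hp, hq]

/-- whether node `i` is the first occurrence of its buffer at its level -/
def firstOcc [NeZero V] {k : ℕ} (Vs : VsT M V k) (i : NodeT M k) : Prop :=
  ∀ i' : NodeT M k, i'.1.length = i.1.length → bufK Vs i'.1 = bufK Vs i.1 →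
    Encodable.encode i.1 ≤ Encodable.encode i'.1

/-- the coupled iid pattern -/
noncomputable def patK' [NeZero V] {k : ℕ} (Ns : NsT M N V k) (Vs : VsT M V k) (f : FT M N k)
    (i : NodeT M k) : Fin N :=
  if firstOcc Vs i then patK Ns Vs i else f i

lemma firstOcc_of_not_coll [NeZero V] {k : ℕ} (Vs : VsT M V k) (i : NodeT M k)
    (h : ¬ Coll k Vs i.1.length) : firstOcc Vs i := by
  intro i' hlen hbuf
  by_cases hii : i'.1 = i.1
  · rw [hii]
  · exact absurd ⟨i'.1, (mem_listsLen M _ _).mpr hlen, i.1,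
      (mem_listsLen M _ _).mpr rfl, hii, hbuf⟩ h

lemma patK'_eq_patK [NeZero V] {k : ℕ} (Ns : NsT M N V k) (Vs : VsT M V k) (f : FT M N k)
    {L : ℕ} (hnc : ∀ l ≤ L, ¬ Coll k Vs l) (i : NodeT M k) (hi : i.1.length ≤ L) :
    patK' Ns Vs f i = patK Ns Vs i := by
  unfold patK'
  rw [if_pos (firstOcc_of_not_coll Vs i (hnc _ hi))]

/-- pointwise coupling distance bound -/
lemma dist_patK_patK' [NeZero M] [NeZero V] {k : ℕ} (Ns : NsT M N V k) (Vs : VsT M V k)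
    (f : FT M N k) (j : ℕ) (hjk : j ≤ k) :
    dist (repP (patK Ns Vs)) (repP (patK' Ns Vs f))
      ≤ (1/(M:ℝ))^(j+1) + ∑ l ∈ Finset.Icc 1 j, (1/(M:ℝ))^l * ind (FC k Vs l) := by
  have hsum0 : (0:ℝ) ≤ ∑ l ∈ Finset.Icc 1 j, (1/(M:ℝ))^l * ind (FC k Vs l) :=
    Finset.sum_nonneg fun l _ => mul_nonneg (by positivity) (ind_nonneg _)
  by_cases hex : ∃ l, l ≤ j ∧ Coll k Vs l
  · set l₀ := Nat.find hex with hl₀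
    obtain ⟨hl₀j, hl₀c⟩ := Nat.find_spec hex
    have hmin : ∀ l' < l₀, ¬ Coll k Vs l' := by
      intro l' hl'
      have := Nat.find_min hex hl'
      intro hcoll
      exact this ⟨by omega, hcoll⟩
    have hl₀1 : 1 ≤ l₀ := by
      rcases Nat.eq_zero_or_pos l₀ with h0 | h1
      · exfalso
        apply not_coll_zero k Vs
        rw [← h0, hl₀]
        exact hl₀c
      · exact h1
    have hFC : FC k Vs l₀ := ⟨hl₀c, hmin⟩
    have hdist : dist (repP (patK Ns Vs)) (repP (patK' Ns Vs f)) ≤ (1/(M:ℝ))^l₀ := by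
      have := dist_repP_le (patK Ns Vs) (patK' Ns Vs f) (l₀ - 1) (fun i hi =>
        (patK'_eq_patK Ns Vs f (fun l hl => hmin l (by omega)) i hi).symm)
      calc dist (repP (patK Ns Vs)) (repP (patK' Ns Vs f)) ≤ (1/(M:ℝ))^(l₀-1+1) := this
        _ = (1/(M:ℝ))^l₀ := by congr 1; omega
    calc dist (repP (patK Ns Vs)) (repP (patK' Ns Vs f)) ≤ (1/(M:ℝ))^l₀ := hdist
      _ = (1/(M:ℝ))^l₀ * ind (FC k Vs l₀) := by rw [ind_true hFC, mul_one]
      _ ≤ ∑ l ∈ Finset.Icc 1 j, (1/(M:ℝ))^l * ind (FC k Vs l) :=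
          Finset.single_le_sum (fun l _ => mul_nonneg (by positivity) (ind_nonneg _))
            (Finset.mem_Icc.mpr ⟨hl₀1, hl₀j⟩)
      _ ≤ _ := le_add_of_nonneg_left (by positivity)
  · push_neg at hex
    have hdist : dist (repP (patK Ns Vs)) (repP (patK' Ns Vs f)) ≤ (1/(M:ℝ))^(j+1) := by
      apply dist_repP_le (patK Ns Vs) (patK' Ns Vs f) j
      intro i hi
      exact (patK'_eq_patK Ns Vs f (fun l hl => hex l hl) i hi).symm
    exact le_trans hdist (le_add_of_nonneg_right hsum0)

end Aux5

section Aux6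
open scoped Classical

variable {M N V : ℕ}

lemma coll_congr [NeZero V] {k : ℕ} {Vs Vs' : VsT M V k} (l : ℕ)
    (h : ∀ t : Fin (k+1), (t:ℕ) < l → Vs t = Vs' t) :
    Coll k Vs l ↔ Coll k Vs' l := by
  have hb : ∀ p ∈ listsLen M l, bufK Vs p = bufK Vs' p := by
    intro p hp
    apply bufK_congr
    intro t ht
    exact h t (by rwa [(mem_listsLen M l p).mp hp] at ht)
  constructor
  · rintro ⟨p, hp, q, hq, hpq, hbuf⟩
    exact ⟨p, hp, q, hq, hpq, by rw [← hb p hp, ← hb q hq]; exact hbuf⟩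
  · rintro ⟨p, hp, q, hq, hpq, hbuf⟩
    exact ⟨p, hp, q, hq, hpq, by rw [hb p hp, hb q hq]; exact hbuf⟩

lemma bufK_concat' [NeZero V] {k : ℕ} (Vs : VsT M V k) (p : List (Fin M)) (m : Fin M)
    (t : Fin (k+1)) (ht : (t:ℕ) = p.length) :
    bufK Vs (p ++ [m]) = Vs t (bufK Vs p, m) := by
  have hp : p.length < k+1 := by
    have := t.isLt
    omega
  rw [bufK_concat Vs p m hp]
  congr 1
  exact Fin.ext ht.symm

lemma sum_FC_le [NeZero M] [NeZero V] (k l : ℕ) (hl1 : 1 ≤ l) (hlk : l ≤ k) :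
    ∑ Vs : VsT M V k,
      (∏ _t : Fin (k+1), ∏ _p : Fin V × Fin M, (1/(V:ℝ))) * ind (FC k Vs l)
      ≤ (M:ℝ)^(2*l) * (1/(V:ℝ)) := by
  set w : ℝ := ∏ _t : Fin (k+1), ∏ _p : Fin V × Fin M, (1/(V:ℝ)) with hw
  have hw0 : 0 ≤ w := Finset.prod_nonneg fun _ _ => Finset.prod_nonneg fun _ _ => by positivity
  set pairs := (listsLen M l ×ˢ listsLen M l).filter (fun pq => pq.1 ≠ pq.2) with hpairs
  have step1 : ∀ Vs : VsT M V k, ind (FC k Vs l) ≤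
      ∑ pq ∈ pairs, ind ((∀ l' < l, ¬ Coll k Vs l') ∧ bufK Vs pq.1 = bufK Vs pq.2) := by
    intro Vs
    apply ind_exists_le_sum
    rintro ⟨⟨p, hp, q, hq, hpq, hbuf⟩, hmin⟩
    refine ⟨(p, q), ?_, hmin, hbuf⟩
    rw [hpairs, Finset.mem_filter, Finset.mem_product]
    exact ⟨⟨hp, hq⟩, hpq⟩
  calc ∑ Vs : VsT M V k, w * ind (FC k Vs l)
      ≤ ∑ Vs : VsT M V k, ∑ pq ∈ pairs,
          w * ind ((∀ l' < l, ¬ Coll k Vs l') ∧ bufK Vs pq.1 = bufK Vs pq.2) := by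
        apply Finset.sum_le_sum
        intro Vs _
        rw [← Finset.mul_sum]
        exact mul_le_mul_of_nonneg_left (step1 Vs) hw0
    _ = ∑ pq ∈ pairs, ∑ Vs : VsT M V k,
          w * ind ((∀ l' < l, ¬ Coll k Vs l') ∧ bufK Vs pq.1 = bufK Vs pq.2) :=
        Finset.sum_comm
    _ ≤ ∑ _pq ∈ pairs, (1/(V:ℝ)) := by
        apply Finset.sum_le_sum
        rintro ⟨p, q⟩ hpq
        rw [hpairs, Finset.mem_filter, Finset.mem_product] at hpq
        obtain ⟨⟨hp, hq⟩, hne⟩ := hpq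
        have hplen : p.length = l := (mem_listsLen M l p).mp hp
        have hqlen : q.length = l := (mem_listsLen M l q).mp hq
        have hp0 : p ≠ [] := by
          intro h
          rw [h] at hplen
          simp at hplen
          omega
        have hq0 : q ≠ [] := by
          intro h
          rw [h] at hqlen
          simp at hqlen
          omega
        set t0 : Fin (k+1) := ⟨l-1, by omega⟩ with ht0
        set pD := p.dropLast with hpD
        set qD := q.dropLast with hqD
        set pm := p.getLast hp0 with hpm
        set qm := q.getLast hq0 with hqm
        have hpdec : pD ++ [pm] = p := List.dropLast_append_getLast hp0
        have hqdec : qD ++ [qm] = q := List.dropLast_append_getLast hq0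
        have hpDlen : pD.length = l - 1 := by rw [hpD, List.length_dropLast, hplen]
        have hqDlen : qD.length = l - 1 := by rw [hqD, List.length_dropLast, hqlen]
        set WofR : ({t : Fin (k+1) // t ≠ t0} → (Fin V × Fin M) → Fin V) → VsT M V k :=
          fun r t => if h : t = t0 then (fun _ => 0) else r ⟨t, h⟩ with hWofR
        have hagree : ∀ (Vs : VsT M V k) (t : Fin (k+1)), (t:ℕ) < l - 1 →
            WofR (fun t' => Vs t'.1) t = Vs t := by
          intro Vs t ht
          have htne : t ≠ t0 := by
            intro h
            rw [h, ht0] at ht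
            simp at ht
          simp only [hWofR]
          rw [dif_neg htne]
        have key := pair_core (V := V) (κ := Fin V × Fin M) (T := k+1) t0
          (fun r => ∀ l' < l, ¬ Coll k (WofR r) l')
          (fun r => (bufK (WofR r) pD, pm))
          (fun r => (bufK (WofR r) qD, qm))
          (by
            intro r hC heq
            rw [Prod.mk.injEq] at heq
            obtain ⟨h1, h2⟩ := heq
            by_cases hDD : pD = qD
            · exact hne (by rw [← hpdec, ← hqdec, hDD, h2])
            · exact hC (l-1) (by omega)
                ⟨pD, (mem_listsLen M (l-1) pD).mpr hpDlen, qD,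
                  (mem_listsLen M (l-1) qD).mpr hqDlen, hDD, h1⟩)
        refine le_trans (Finset.sum_le_sum ?_) key
        intro Vs _
        apply mul_le_mul_of_nonneg_left _ hw0
        apply ind_mono
        rintro ⟨hmin, hbuf⟩
        have hres : ∀ l' < l, ¬ Coll k (WofR fun t' => Vs t'.1) l' := by
          intro l' hl'
          rw [coll_congr l' (fun t ht => hagree Vs t (by omega))]
          exact hmin l' hl'
        refine ⟨hres, ?_⟩
        show Vs t0 (bufK (WofR fun t' => Vs t'.1) pD, pm)
            = Vs t0 (bufK (WofR fun t' => Vs t'.1) qD, qm)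
        have hbufD : ∀ x : List (Fin M), x.length = l - 1 →
            bufK (WofR fun t' => Vs t'.1) x = bufK Vs x := fun x hx =>
          bufK_congr x (fun t ht => hagree Vs t (by omega))
        have hpbuf : bufK Vs p = Vs t0 (bufK Vs pD, pm) := by
          conv_lhs => rw [← hpdec]
          exact bufK_concat' Vs pD pm t0 (by rw [hpDlen])
        have hqbuf : bufK Vs q = Vs t0 (bufK Vs qD, qm) := by
          conv_lhs => rw [← hqdec]
          exact bufK_concat' Vs qD qm t0 (by rw [hqDlen])
        rw [hbufD pD hpDlen, hbufD qD hqDlen, ← hpbuf, ← hqbuf]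
        exact hbuf
    _ ≤ (M:ℝ)^(2*l) * (1/(V:ℝ)) := by
        rw [Finset.sum_const, nsmul_eq_mul]
        apply mul_le_mul_of_nonneg_right _ (by positivity)
        calc (pairs.card : ℝ) ≤ ((listsLen M l ×ˢ listsLen M l).card : ℝ) := by
              exact_mod_cast Finset.card_filter_le _ _
          _ = (M:ℝ)^(2*l) := by
              rw [Finset.card_product, card_listsLen]
              push_cast
              ring

end Aux6

section Aux7
open scoped Classical

variable {M N V : ℕ}

lemma patK'_decode [NeZero V] {k : ℕ} (Vs : VsT M V k)
    (x : (Fin (k+1) × Fin V) ⊕ NodeT M k → Fin N) (i : NodeT M k) :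
    patK' (fun t v => x (Sum.inl (t, v))) Vs (fun i' => x (Sum.inr i')) i
      = x (if firstOcc Vs i then Sum.inl (⟨i.1.length, Nat.lt_succ_of_le i.2⟩, bufK Vs i.1)
          else Sum.inr i) := by
  unfold patK'
  by_cases h : firstOcc Vs i
  · rw [if_pos h, if_pos h]
    rfl
  · rw [if_neg h, if_neg h]

lemma iid_patK' [NeZero V] (k : ℕ) (P : Fin N → NNReal) (hP1 : ∑ y, (P y : ℝ) = 1)
    (c : FT M N k) :
    ∑ Vs : VsT M V k, ∑ Ns : NsT M N V k, ∑ f : FT M N k,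
      (∏ t, ∏ v, (P (Ns t v) : ℝ)) * (∏ _t : Fin (k+1), ∏ _p : Fin V × Fin M, (1/(V:ℝ)))
        * (∏ i, (P (f i) : ℝ)) * ind (∀ i, patK' Ns Vs f i = c i)
      = ∏ i : NodeT M k, (P (c i) : ℝ) := by
  set wL : ℝ := ∏ _t : Fin (k+1), ∏ _p : Fin V × Fin M, (1/(V:ℝ)) with hwL
  have inner : ∀ Vs : VsT M V k,
      (∑ Ns : NsT M N V k, ∑ f : FT M N k,
        (∏ t, ∏ v, (P (Ns t v) : ℝ)) * wL * (∏ i, (P (f i) : ℝ))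
          * ind (∀ i, patK' Ns Vs f i = c i))
        = wL * ∏ i : NodeT M k, (P (c i) : ℝ) := by
    intro Vs
    set s : NodeT M k → (Fin (k+1) × Fin V) ⊕ NodeT M k := fun i =>
      if firstOcc Vs i then Sum.inl (⟨i.1.length, Nat.lt_succ_of_le i.2⟩, bufK Vs i.1)
      else Sum.inr i with hs
    have hsinj : Function.Injective s := by
      intro i i' hii
      simp only [hs] at hii
      by_cases h1 : firstOcc Vs i <;> by_cases h2 : firstOcc Vs i'
      · rw [if_pos h1, if_pos h2] at hii
        have h3 := Sum.inl.inj hii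
        rw [Prod.mk.injEq] at h3
        obtain ⟨hlen, hbuf⟩ := h3
        have hlen' : i.1.length = i'.1.length := by
          have := congrArg Fin.val hlen
          simpa using this
        have e1 := h1 i' hlen'.symm (by rw [hbuf])
        have e2 := h2 i hlen' (by rw [hbuf])
        exact Subtype.ext (Encodable.encode_injective (le_antisymm e1 e2))
      · rw [if_pos h1, if_neg h2] at hii
        exact absurd hii (by simp)
      · rw [if_neg h1, if_pos h2] at hii
        exact absurd hii (by simp)
      · rw [if_neg h1, if_neg h2] at hii
        exact Subtype.ext (congrArg Subtype.val (Sum.inr.inj hii))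
    have H := iid_selection (ι := (Fin (k+1) × Fin V) ⊕ NodeT M k) (γ := NodeT M k)
      (fun y : Fin N => (P y : ℝ)) hP1 s hsinj c
    set E2 : ((Fin (k+1) × Fin V) ⊕ NodeT M k → Fin N) ≃ (NsT M N V k × FT M N k) :=
      { toFun := fun x => (fun t v => x (Sum.inl (t, v)), fun i => x (Sum.inr i)),
        invFun := fun p => Sum.elim (fun tv => p.1 tv.1 tv.2) p.2,
        left_inv := fun x => by funext j; cases j <;> rfl,
        right_inv := fun p => rfl } with hE2
    calc (∑ Ns : NsT M N V k, ∑ f : FT M N k,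
        (∏ t, ∏ v, (P (Ns t v) : ℝ)) * wL * (∏ i, (P (f i) : ℝ))
          * ind (∀ i, patK' Ns Vs f i = c i))
        = ∑ p : NsT M N V k × FT M N k,
            (∏ t, ∏ v, (P (p.1 t v) : ℝ)) * wL * (∏ i, (P (p.2 i) : ℝ))
              * ind (∀ i, patK' p.1 Vs p.2 i = c i) := by
          rw [Fintype.sum_prod_type]
      _ = ∑ x : (Fin (k+1) × Fin V) ⊕ NodeT M k → Fin N,
            (∏ t, ∏ v, (P ((E2 x).1 t v) : ℝ)) * wL * (∏ i, (P ((E2 x).2 i) : ℝ))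
              * ind (∀ i, patK' (E2 x).1 Vs (E2 x).2 i = c i) :=
          (Equiv.sum_comp E2 _).symm
      _ = ∑ x : (Fin (k+1) × Fin V) ⊕ NodeT M k → Fin N,
            wL * ((∏ j, (P (x j) : ℝ)) * ind (∀ i, x (s i) = c i)) := by
          apply Finset.sum_congr rfl
          intro x _
          have hE2x1 : (E2 x).1 = fun t v => x (Sum.inl (t, v)) := rfl
          have hE2x2 : (E2 x).2 = fun i => x (Sum.inr i) := rfl
          have hprod : (∏ j, (P (x j) : ℝ))
              = (∏ t, ∏ v, (P (x (Sum.inl (t, v))) : ℝ)) * (∏ i, (P (x (Sum.inr i)) : ℝ)) := by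
            rw [Fintype.prod_sum_type]
            congr 1
            rw [Fintype.prod_prod_type]
          have hind : ind (∀ i, patK' (fun t v => x (Sum.inl (t, v))) Vs
                (fun i' => x (Sum.inr i')) i = c i)
              = ind (∀ i, x (s i) = c i) := by
            apply ind_congr
            constructor
            · intro h i
              exact ((patK'_decode Vs x i).symm.trans (h i) : x (s i) = c i)
            · intro h i
              exact (patK'_decode Vs x i).trans (h i)
          simp only [hE2x1, hE2x2]
          rw [hind, hprod]
          ring
      _ = wL * ∏ i : NodeT M k, (P (c i) : ℝ) := by
          rw [← Finset.mul_sum, H]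
  rw [Finset.sum_congr rfl fun Vs _ => inner Vs, ← Finset.sum_mul, hwL, sum_const_unif2,
    one_mul]

end Aux7

section Aux8
open scoped Classical

variable {M N V : ℕ}

lemma listsLe_zero : listsLe M 0 = {([] : List (Fin M))} := by
  ext i
  rw [mem_listsLe, Finset.mem_singleton]
  constructor
  · intro h
    exact List.length_eq_zero_iff.mp (by omega)
  · rintro rfl
    simp

lemma listsLe_succ (k : ℕ) : listsLe M (k+1) = insert ([] : List (Fin M))
    ((Finset.univ ×ˢ listsLe M k).image fun p => p.1 :: p.2) := by
  ext i
  rw [mem_listsLe, Finset.mem_insert]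
  cases i with
  | nil => simp
  | cons m j =>
    simp only [List.length_cons, Finset.mem_image, Finset.mem_product, Finset.mem_univ,
      true_and]
    constructor
    · intro h
      refine Or.inr ⟨(m, j), ?_, rfl⟩
      rw [mem_listsLe]
      show j.length ≤ k
      omega
    · rintro (h | ⟨⟨m', j'⟩, hj', hcons⟩)
      · exact absurd h (List.cons_ne_nil m j)
      · have h2 : j' = j := by injection hcons
        rw [mem_listsLe] at hj'
        have hj2 : j'.length ≤ k := hj'
        rw [← h2]
        omega

lemma cylProb_eq_prod (P : Fin N → NNReal) : ∀ (k : ℕ) (τ : CodeTree M N),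
    cylProb P k τ = ∏ i ∈ listsLe M k, (P (τ i) : ENNReal)
  | 0, τ => by
    rw [listsLe_zero, Finset.prod_singleton]
    rfl
  | k+1, τ => by
    have hnil : ([] : List (Fin M)) ∉ (Finset.univ ×ˢ listsLe M k).image
        (fun p : Fin M × List (Fin M) => p.1 :: p.2) := by
      rw [Finset.mem_image]
      rintro ⟨p, -, hp⟩
      exact List.cons_ne_nil p.1 p.2 hp
    have hinj : ∀ p ∈ Finset.univ ×ˢ listsLe M k, ∀ q ∈ Finset.univ ×ˢ listsLe M k,
        (fun p : Fin M × List (Fin M) => p.1 :: p.2) p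
          = (fun p : Fin M × List (Fin M) => p.1 :: p.2) q → p = q := by
      rintro ⟨a, b⟩ - ⟨a', b'⟩ - h
      have h1 : a = a' := by injection h
      have h2 : b = b' := by injection h
      rw [h1, h2]
    rw [listsLe_succ, Finset.prod_insert hnil, Finset.prod_image hinj,
      Finset.prod_product]
    show (P (τ []) : ENNReal) * ∏ m : Fin M, cylProb P k (fun j => τ (m :: j)) = _
    congr 1
    apply Finset.prod_congr rfl
    intro m _
    rw [cylProb_eq_prod P k (fun j => τ (m :: j))]

lemma sum_prod_one {γ : Type*} [Fintype γ] [DecidableEq γ] {n : ℕ} (q : Fin n → ℝ)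
    (hq : ∑ y, q y = 1) : ∑ g : γ → Fin n, ∏ i, q (g i) = 1 := by
  rw [← Fintype.prod_sum (fun (_ : γ) (y : Fin n) => q y)]
  rw [Finset.prod_congr rfl fun i _ => hq, Finset.prod_const, one_pow]

lemma sum_fun_ind {γ : Type*} [Fintype γ] [DecidableEq γ] {n : ℕ} (d : γ → Fin n)
    (g : (γ → Fin n) → ℝ) :
    ∑ c : γ → Fin n, ind (∀ i, d i = c i) * g c = g d := by
  have h1 : ∀ c : γ → Fin n, ind (∀ i, d i = c i) = ind (d = c) :=
    fun c => ind_congr funext_iff.symm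
  simp only [h1]
  rw [Finset.sum_eq_single d (fun c _ hc => by rw [ind_false (fun h => hc h.symm), zero_mul])
    (fun h => absurd (Finset.mem_univ d) h), ind_true rfl, one_mul]

lemma probA_toReal [NeZero V] (P : Fin N → NNReal) (a : IdxA M N V) :
    (probA P a).toReal = (∏ v, (P ((a v).1) : ℝ)) / (V:ℝ)^(M*V) := by
  unfold probA
  simp [ENNReal.toReal_div, ENNReal.toReal_prod, ENNReal.toReal_pow]

lemma probA_ne_top [NeZero V] (P : Fin N → NNReal) (a : IdxA M N V) :
    probA P a ≠ ⊤ := by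
  unfold probA
  rw [div_eq_mul_inv]
  apply ENNReal.mul_ne_top
  · exact (ENNReal.prod_lt_top fun v _ => ENNReal.coe_lt_top).ne
  · rw [ENNReal.inv_ne_top]
    exact pow_ne_zero _ (Nat.cast_ne_zero.mpr (NeZero.ne V))

end Aux8

section Aux9
open scoped Classical

variable {M N V : ℕ}

lemma unroll [NeZero M] [Fact (2 ≤ M)] [NeZero V] (P : Fin N → NNReal)
    (μV : MeasureTheory.Measure (Fin V → CodeTree M N))
    (hinv : μV = ∑ a : IdxA M N V, probA P a • μV.map (eta a)) :
    ∀ (s : ℕ) (B : Set (Fin V → CodeTree M N)), MeasurableSet B →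
      μV B = ∑ e : Fin s → IdxA M N V, (∏ t, probA P (e t)) * μV (etaCompF s e ⁻¹' B)
  | 0, B, hB => by
    rw [Fintype.sum_unique]
    simp [etaCompF]
  | s+1, B, hB => by
    have step : μV B = ∑ a : IdxA M N V, probA P a * μV (eta a ⁻¹' B) := by
      conv_lhs => rw [hinv]
      rw [MeasureTheory.Measure.finset_sum_apply]
      apply Finset.sum_congr rfl
      intro a _
      rw [MeasureTheory.Measure.smul_apply, smul_eq_mul,
        MeasureTheory.Measure.map_apply (measurable_eta a) hB]
    rw [step]
    rw [← Equiv.sum_comp (Fin.consEquiv (fun _ : Fin (s+1) => IdxA M N V))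
      (fun e => (∏ t, probA P (e t)) * μV (etaCompF (s+1) e ⁻¹' B)), Fintype.sum_prod_type]
    apply Finset.sum_congr rfl
    intro a _
    rw [unroll P μV hinv s (eta a ⁻¹' B) (measurable_eta a hB), Finset.mul_sum]
    apply Finset.sum_congr rfl
    intro e' _
    have h1 : (Fin.consEquiv (fun _ : Fin (s+1) => IdxA M N V)) (a, e') = Fin.cons a e' := rfl
    have hcomp : etaCompF (s+1) (Fin.cons a e') = fun ω => eta a (etaCompF s e' ω) := by
      rw [etaCompF, Fin.cons_zero, Fin.tail_cons]
    have h2 : (fun ω => eta a (etaCompF s e' ω)) ⁻¹' B = etaCompF s e' ⁻¹' (eta a ⁻¹' B) := rfl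
    rw [h1, hcomp, h2, Fin.prod_univ_succ]
    simp only [Fin.cons_zero, Fin.cons_succ]
    rw [mul_assoc]

end Aux9

section Aux10
open scoped Classical

variable {M N V : ℕ}

/-- node parts of an `IdxA` family -/
def NsOf {k : ℕ} (e : Fin (k+1) → IdxA M N V) : NsT M N V k := fun t v => ((e t) v).1

/-- limb parts of an `IdxA` family -/
def VsOf {k : ℕ} (e : Fin (k+1) → IdxA M N V) : VsT M V k := fun t p => ((e t) p.1).2 p.2

lemma patE_extE [NeZero N] [NeZero V] {k : ℕ} (e : Fin (k+1) → IdxA M N V) (i : NodeT M k) :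
    patE (extE e) 0 i.1 = patK (NsOf e) (VsOf e) i := by
  have hlt : i.1.length < k+1 := Nat.lt_succ_of_le i.2
  have hbuf : bufN (fun t u m => ((extE e t) u).2 m) 0 0 i.1 = bufK (VsOf e) i.1 := by
    unfold bufK
    apply bufN_congr
    intro t' _ ht1
    have ht : t' < k+1 := by
      rw [zero_add] at ht1
      omega
    funext v m
    show ((extE e t') v).2 m = VsExt (VsOf e) t' v m
    unfold extE VsExt VsOf
    rw [dif_pos ht, dif_pos ht]
  unfold patE
  rw [hbuf]
  have h1 : extE e i.1.length = e ⟨i.1.length, hlt⟩ := dif_pos hlt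
  rw [h1]
  rfl

lemma preimage_etaCompF [NeZero M] [Fact (2 ≤ M)] [NeZero V] [NeZero N] {k : ℕ}
    (e : Fin (k+1) → IdxA M N V) (c : FT M N k) :
    etaCompF (k+1) e ⁻¹' ((fun ω : Fin V → CodeTree M N => ω 0) ⁻¹' cyl M N k (repP c))
      = if (∀ i : NodeT M k, patK (NsOf e) (VsOf e) i = c i) then Set.univ else ∅ := by
  have hval : ∀ (ω : Fin V → CodeTree M N) (i : List (Fin M)) (hi : i.length ≤ k),
      (etaCompF (k+1) e ω 0) i = patK (NsOf e) (VsOf e) ⟨i, hi⟩ := by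
    intro ω i hi
    rw [etaCompF_eq, etaCompN_apply (k+1) _ ω 0 i (by omega)]
    exact patE_extE e ⟨i, hi⟩
  ext ω
  simp only [Set.mem_preimage, cyl, Set.mem_setOf_eq]
  by_cases hc : ∀ i : NodeT M k, patK (NsOf e) (VsOf e) i = c i
  · rw [if_pos hc]
    simp only [Set.mem_univ, iff_true]
    intro i hi
    rw [hval ω i hi, repP_agree c i hi]
    exact hc ⟨i, hi⟩
  · rw [if_neg hc]
    simp only [Set.mem_empty_iff_false, iff_false]
    intro hall
    apply hc
    intro i
    have := hall i.1 i.2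
    rw [hval ω i.1 i.2, repP_agree c i.1 i.2] at this
    exact this

lemma weight_bridge [NeZero V] (P : Fin N → NNReal) {k : ℕ} (e : Fin (k+1) → IdxA M N V) :
    (∏ t, (probA P (e t)).toReal)
      = (∏ t, ∏ v, (P (NsOf e t v) : ℝ))
        * (∏ _t : Fin (k+1), ∏ _p : Fin V × Fin M, (1/(V:ℝ))) := by
  have hwL : (∏ _t : Fin (k+1), ∏ _p : Fin V × Fin M, (1/(V:ℝ)))
      = (((V:ℝ)^(M*V))⁻¹)^(k+1) := by
    rw [Finset.prod_const, Finset.prod_const, Finset.card_univ, Finset.card_univ,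
      Fintype.card_prod, Fintype.card_fin, Fintype.card_fin, Fintype.card_fin,
      one_div, ← inv_pow, Nat.mul_comm]
  rw [hwL, Finset.prod_congr rfl fun t _ => probA_toReal P (e t),
    Finset.prod_div_distrib, Finset.prod_const, Finset.card_univ, Fintype.card_fin,
    div_eq_mul_inv, ← inv_pow]
  rfl

/-- rearrangement of an `IdxA` family into node and limb parts -/
def E3 {M N V k : ℕ} : (Fin (k+1) → IdxA M N V) ≃ (NsT M N V k × VsT M V k) where
  toFun e := (NsOf e, VsOf e)
  invFun p := fun t v => (p.1 t v, fun m => p.2 t (v, m))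
  left_inv e := rfl
  right_inv p := rfl

lemma muV_cyl_toReal [NeZero M] [Fact (2 ≤ M)] [NeZero V] [NeZero N]
    (P : Fin N → NNReal) (μV : MeasureTheory.Measure (Fin V → CodeTree M N))
    [MeasureTheory.IsProbabilityMeasure μV]
    (hinv : μV = ∑ a : IdxA M N V, probA P a • μV.map (eta a)) (k : ℕ) (c : FT M N k) :
    (μV ((fun ω : Fin V → CodeTree M N => ω 0) ⁻¹' cyl M N k (repP c))).toReal
      = ∑ Ns : NsT M N V k, ∑ Vs : VsT M V k,
          (∏ t, ∏ v, (P (Ns t v) : ℝ)) * (∏ _t : Fin (k+1), ∏ _p : Fin V × Fin M, (1/(V:ℝ)))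
            * ind (∀ i, patK Ns Vs i = c i) := by
  have hM : 2 ≤ M := Fact.out
  have hB : MeasurableSet ((fun ω : Fin V → CodeTree M N => ω 0) ⁻¹' cyl M N k (repP c)) :=
    (measurable_pi_apply 0) (measurableSet_cyl hM k (repP c))
  rw [unroll P μV hinv (k+1) _ hB]
  have hterm : ∀ e : Fin (k+1) → IdxA M N V,
      (∏ t, probA P (e t)) * μV (etaCompF (k+1) e ⁻¹' ((fun ω : Fin V → CodeTree M N => ω 0) ⁻¹'
          cyl M N k (repP c)))
        = (∏ t, probA P (e t))
            * (if (∀ i : NodeT M k, patK (NsOf e) (VsOf e) i = c i) then 1 else 0) := by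
    intro e
    rw [preimage_etaCompF e c]
    congr 1
    split
    · exact MeasureTheory.measure_univ
    · exact MeasureTheory.measure_empty
  rw [Finset.sum_congr rfl fun e _ => hterm e]
  rw [ENNReal.toReal_sum (fun e _ => ENNReal.mul_ne_top
    (ENNReal.prod_lt_top fun t _ => (probA_ne_top P (e t)).lt_top).ne
    (by split <;> simp))]
  have hterm2 : ∀ e : Fin (k+1) → IdxA M N V,
      ((∏ t, probA P (e t))
        * (if (∀ i : NodeT M k, patK (NsOf e) (VsOf e) i = c i) then 1 else 0)).toReal
      = (∏ t, ∏ v, (P (NsOf e t v) : ℝ))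
          * (∏ _t : Fin (k+1), ∏ _p : Fin V × Fin M, (1/(V:ℝ)))
          * ind (∀ i, patK (NsOf e) (VsOf e) i = c i) := by
    intro e
    rw [ENNReal.toReal_mul, ENNReal.toReal_prod, weight_bridge P e]
    congr 1
    unfold ind
    split
    · simp
    · simp
  rw [Finset.sum_congr rfl fun e _ => hterm2 e]
  have hre := Equiv.sum_comp (E3 (M := M) (N := N) (V := V) (k := k))
    (fun p : NsT M N V k × VsT M V k =>
      (∏ t, ∏ v, (P (p.1 t v) : ℝ)) * (∏ _t : Fin (k+1), ∏ _p : Fin V × Fin M, (1/(V:ℝ)))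
        * ind (∀ i, patK p.1 p.2 i = c i))
  rw [Fintype.sum_prod_type] at hre
  exact hre

lemma rho_cyl_toReal [NeZero M] {k : ℕ} (P : Fin N → NNReal) (c : FT M N k) :
    (cylProb P k (repP c)).toReal = ∏ i : NodeT M k, (P (c i) : ℝ) := by
  rw [cylProb_eq_prod, ENNReal.toReal_prod]
  have h1 : ∀ i ∈ listsLe M k, ((P (repP c i) : ENNReal)).toReal
      = (fun i : List (Fin M) => if h : i.length ≤ k then (P (c ⟨i, h⟩) : ℝ) else 0) i := by
    intro i hi
    rw [mem_listsLe] at hi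
    rw [repP_agree c i hi, ENNReal.coe_toReal]
    show (P (c ⟨i, hi⟩) : ℝ) = if h : i.length ≤ k then (P (c ⟨i, h⟩) : ℝ) else 0
    rw [dif_pos hi]
  rw [Finset.prod_congr rfl h1, Finset.prod_subtype (listsLe M k) (mem_listsLe M k)]
  apply Finset.prod_congr rfl
  intro i _
  show (if h : i.1.length ≤ k then (P (c ⟨i.1, h⟩) : ℝ) else 0) = (P (c i) : ℝ)
  rw [dif_pos i.2]

end Aux10

section Aux11
open scoped Classical

variable {M N V : ℕ}

lemma sum_prod_one2 {γ δ : Type*} [Fintype γ] [DecidableEq γ] [Fintype δ] [DecidableEq δ]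
    {n : ℕ} (q : Fin n → ℝ) (hq : ∑ y, q y = 1) :
    ∑ g : γ → δ → Fin n, ∏ x, ∏ y, q (g x y) = 1 := by
  rw [← Fintype.prod_sum (fun (_ : γ) (h : δ → Fin n) => ∏ y, q (h y))]
  rw [Finset.prod_congr rfl fun x _ => sum_prod_one q hq, Finset.prod_const, one_pow]

set_option maxHeartbeats 2000000 in
lemma couple_bound [NeZero M] [NeZero V] {k : ℕ} (P : Fin N → NNReal)
    (hP1 : ∑ y : Fin N, (P y : ℝ) = 1) (f₀ : CodeTree M N → ℝ) (hf₀ : LipschitzWith 1 f₀)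
    {j : ℕ} (hjk : j ≤ k) :
    ∑ c : FT M N k, f₀ (repP c) *
        ((∑ Ns : NsT M N V k, ∑ Vs : VsT M V k,
          (∏ t, ∏ v, (P (Ns t v) : ℝ)) * (∏ _t : Fin (k+1), ∏ _p : Fin V × Fin M, (1/(V:ℝ)))
            * ind (∀ i, patK Ns Vs i = c i))
          - ∏ i : NodeT M k, (P (c i) : ℝ))
      ≤ (1/(M:ℝ))^(j+1)
        + ∑ l ∈ Finset.Icc 1 j, (1/(M:ℝ))^l * ((M:ℝ)^(2*l) * (1/(V:ℝ))) := by
  have hP0 : ∀ y, (0:ℝ) ≤ (P y : ℝ) := fun y => (P y).2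
  set wL : ℝ := ∏ _t : Fin (k+1), ∏ _p : Fin V × Fin M, (1/(V:ℝ)) with hwL
  have hwL0 : 0 ≤ wL := Finset.prod_nonneg fun _ _ => Finset.prod_nonneg fun _ _ => by positivity
  set wN : NsT M N V k → ℝ := fun Ns => ∏ t, ∏ v, (P (Ns t v) : ℝ) with hwN
  have hwN0 : ∀ Ns, 0 ≤ wN Ns := fun Ns =>
    Finset.prod_nonneg fun _ _ => Finset.prod_nonneg fun _ _ => hP0 _
  set wF : FT M N k → ℝ := fun f => ∏ i, (P (f i) : ℝ) with hwF
  have hwF0 : ∀ f, 0 ≤ wF f := fun f => Finset.prod_nonneg fun _ _ => hP0 _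
  have hN1 : ∑ Ns : NsT M N V k, wN Ns = 1 := sum_prod_one2 _ hP1
  have hF1 : ∑ f : FT M N k, wF f = 1 := sum_prod_one _ hP1
  have hL1 : ∑ _Vs : VsT M V k, wL = 1 := sum_const_unif2
  -- q-side identity
  have h1 : ∀ c : FT M N k,
      (∑ Ns : NsT M N V k, ∑ Vs : VsT M V k, wN Ns * wL * ind (∀ i, patK Ns Vs i = c i))
      = ∑ Vs : VsT M V k, ∑ Ns : NsT M N V k, ∑ f : FT M N k,
          wN Ns * wL * wF f * ind (∀ i, patK Ns Vs i = c i) := by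
    intro c
    rw [Finset.sum_comm]
    apply Finset.sum_congr rfl
    intro Vs _
    apply Finset.sum_congr rfl
    intro Ns _
    have hterm : ∀ f : FT M N k, wN Ns * wL * wF f * ind (∀ i, patK Ns Vs i = c i)
        = (wN Ns * wL * ind (∀ i, patK Ns Vs i = c i)) * wF f := by
      intro f
      ring
    rw [Finset.sum_congr rfl fun f _ => hterm f, ← Finset.mul_sum, hF1, mul_one]
  -- p-side identity
  have h2 : ∀ c : FT M N k,
      (∏ i : NodeT M k, (P (c i) : ℝ))
      = ∑ Vs : VsT M V k, ∑ Ns : NsT M N V k, ∑ f : FT M N k,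
          wN Ns * wL * wF f * ind (∀ i, patK' Ns Vs f i = c i) := by
    intro c
    have := iid_patK' (M := M) (V := V) k P hP1 c
    rw [← this]
  -- main difference as an expectation
  have h3 : ∑ c : FT M N k, f₀ (repP c) *
        ((∑ Ns : NsT M N V k, ∑ Vs : VsT M V k,
          wN Ns * wL * ind (∀ i, patK Ns Vs i = c i))
          - ∏ i : NodeT M k, (P (c i) : ℝ))
      = ∑ Vs : VsT M V k, ∑ Ns : NsT M N V k, ∑ f : FT M N k,
          (wN Ns * wL * wF f) * (f₀ (repP (patK Ns Vs)) - f₀ (repP (patK' Ns Vs f))) := by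
    have hsplit : ∀ c : FT M N k, f₀ (repP c) *
        ((∑ Ns : NsT M N V k, ∑ Vs : VsT M V k, wN Ns * wL * ind (∀ i, patK Ns Vs i = c i))
          - ∏ i : NodeT M k, (P (c i) : ℝ))
        = ∑ Vs : VsT M V k, ∑ Ns : NsT M N V k, ∑ f : FT M N k,
            (wN Ns * wL * wF f) *
              (ind (∀ i, patK Ns Vs i = c i) * f₀ (repP c)
                - ind (∀ i, patK' Ns Vs f i = c i) * f₀ (repP c)) := by
      intro c
      rw [h1 c, h2 c, ← Finset.sum_sub_distrib, Finset.mul_sum]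
      apply Finset.sum_congr rfl
      intro Vs _
      rw [← Finset.sum_sub_distrib, Finset.mul_sum]
      apply Finset.sum_congr rfl
      intro Ns _
      rw [← Finset.sum_sub_distrib, Finset.mul_sum]
      apply Finset.sum_congr rfl
      intro f _
      ring
    rw [Finset.sum_congr rfl fun c _ => hsplit c, Finset.sum_comm]
    apply Finset.sum_congr rfl
    intro Vs _
    rw [Finset.sum_comm]
    apply Finset.sum_congr rfl
    intro Ns _
    rw [Finset.sum_comm]
    apply Finset.sum_congr rfl
    intro f _
    rw [← Finset.mul_sum, Finset.sum_sub_distrib,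
      sum_fun_ind (patK Ns Vs) (fun c => f₀ (repP c)),
      sum_fun_ind (patK' Ns Vs f) (fun c => f₀ (repP c))]
  rw [h3]
  -- bound by expected distance
  have h4 : ∀ (Vs : VsT M V k) (Ns : NsT M N V k) (f : FT M N k),
      (wN Ns * wL * wF f) * (f₀ (repP (patK Ns Vs)) - f₀ (repP (patK' Ns Vs f)))
        ≤ (wN Ns * wL * wF f) *
            ((1/(M:ℝ))^(j+1) + ∑ l ∈ Finset.Icc 1 j, (1/(M:ℝ))^l * ind (FC k Vs l)) := by
    intro Vs Ns f
    apply mul_le_mul_of_nonneg_left _ (mul_nonneg (mul_nonneg (hwN0 _) hwL0) (hwF0 _))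
    have hd : f₀ (repP (patK Ns Vs)) - f₀ (repP (patK' Ns Vs f))
        ≤ dist (repP (patK Ns Vs)) (repP (patK' Ns Vs f)) := by
      have h := hf₀.dist_le_mul (repP (patK Ns Vs)) (repP (patK' Ns Vs f))
      rw [NNReal.coe_one, one_mul, Real.dist_eq] at h
      exact le_trans (le_abs_self _) h
    exact le_trans hd (dist_patK_patK' Ns Vs f j hjk)
  have h5 : ∑ Vs : VsT M V k, ∑ Ns : NsT M N V k, ∑ f : FT M N k,
      (wN Ns * wL * wF f) *
        ((1/(M:ℝ))^(j+1) + ∑ l ∈ Finset.Icc 1 j, (1/(M:ℝ))^l * ind (FC k Vs l))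
      = ∑ Vs : VsT M V k, wL *
        ((1/(M:ℝ))^(j+1) + ∑ l ∈ Finset.Icc 1 j, (1/(M:ℝ))^l * ind (FC k Vs l)) := by
    apply Finset.sum_congr rfl
    intro Vs _
    have step : ∀ Ns : NsT M N V k, (∑ f : FT M N k, (wN Ns * wL * wF f) *
        ((1/(M:ℝ))^(j+1) + ∑ l ∈ Finset.Icc 1 j, (1/(M:ℝ))^l * ind (FC k Vs l)))
        = wN Ns * (wL * ((1/(M:ℝ))^(j+1)
            + ∑ l ∈ Finset.Icc 1 j, (1/(M:ℝ))^l * ind (FC k Vs l))) := by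
      intro Ns
      have hterm : ∀ f : FT M N k, (wN Ns * wL * wF f) *
          ((1/(M:ℝ))^(j+1) + ∑ l ∈ Finset.Icc 1 j, (1/(M:ℝ))^l * ind (FC k Vs l))
          = (wN Ns * (wL * ((1/(M:ℝ))^(j+1)
              + ∑ l ∈ Finset.Icc 1 j, (1/(M:ℝ))^l * ind (FC k Vs l)))) * wF f := by
        intro f
        ring
      rw [Finset.sum_congr rfl fun f _ => hterm f, ← Finset.mul_sum, hF1, mul_one]
    rw [Finset.sum_congr rfl fun Ns _ => step Ns, ← Finset.sum_mul, hN1, one_mul]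
  calc ∑ Vs : VsT M V k, ∑ Ns : NsT M N V k, ∑ f : FT M N k,
        (wN Ns * wL * wF f) * (f₀ (repP (patK Ns Vs)) - f₀ (repP (patK' Ns Vs f)))
      ≤ ∑ Vs : VsT M V k, ∑ Ns : NsT M N V k, ∑ f : FT M N k,
        (wN Ns * wL * wF f) *
          ((1/(M:ℝ))^(j+1) + ∑ l ∈ Finset.Icc 1 j, (1/(M:ℝ))^l * ind (FC k Vs l)) := by
        apply Finset.sum_le_sum
        intro Vs _
        apply Finset.sum_le_sum
        intro Ns _
        apply Finset.sum_le_sum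
        intro f _
        exact h4 Vs Ns f
    _ = ∑ Vs : VsT M V k, (wL * (1/(M:ℝ))^(j+1)
          + ∑ l ∈ Finset.Icc 1 j, (1/(M:ℝ))^l * (wL * ind (FC k Vs l))) := by
        rw [h5]
        apply Finset.sum_congr rfl
        intro Vs _
        rw [mul_add, Finset.mul_sum]
        congr 1
        apply Finset.sum_congr rfl
        intro l _
        ring
    _ = (1/(M:ℝ))^(j+1) * (∑ _Vs : VsT M V k, wL)
          + ∑ l ∈ Finset.Icc 1 j, (1/(M:ℝ))^l * (∑ Vs : VsT M V k, wL * ind (FC k Vs l)) := by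
        rw [Finset.sum_add_distrib, Finset.sum_comm]
        congr 1
        · rw [Finset.mul_sum]
          apply Finset.sum_congr rfl
          intro Vs _
          ring
        · apply Finset.sum_congr rfl
          intro l _
          rw [Finset.mul_sum]
    _ ≤ (1/(M:ℝ))^(j+1) * 1
          + ∑ l ∈ Finset.Icc 1 j, (1/(M:ℝ))^l * ((M:ℝ)^(2*l) * (1/(V:ℝ))) := by
        apply add_le_add
        · rw [hL1]
        · apply Finset.sum_le_sum
          intro l hl
          rw [Finset.mem_Icc] at hl
          apply mul_le_mul_of_nonneg_left _ (by positivity)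
          have := sum_FC_le (M := M) (V := V) k l hl.1 (le_trans hl.2 hjk)
          calc ∑ Vs : VsT M V k, wL * ind (FC k Vs l)
              = ∑ Vs : VsT M V k,
                (∏ _t : Fin (k+1), ∏ _p : Fin V × Fin M, (1/(V:ℝ))) * ind (FC k Vs l) := by
                apply Finset.sum_congr rfl
                intro Vs _
                rw [hwL]
            _ ≤ (M:ℝ)^(2*l) * (1/(V:ℝ)) := this
    _ = (1/(M:ℝ))^(j+1) + ∑ l ∈ Finset.Icc 1 j, (1/(M:ℝ))^l * ((M:ℝ)^(2*l) * (1/(V:ℝ))) := by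
        rw [mul_one]

end Aux11

section Aux12
open scoped Classical
open MeasureTheory

variable {M N : ℕ}

lemma treeDist_le_one [NeZero M] (ω κ : CodeTree M N) : treeDist ω κ ≤ 1 := by
  unfold treeDist
  split
  · norm_num
  · exact pow_le_one₀ oneDivM_pos.le oneDivM_le_one

lemma lipschitz_bounded [NeZero M] [NeZero N] (f₀ : CodeTree M N → ℝ)
    (hf₀ : LipschitzWith 1 f₀) (x : CodeTree M N) :
    ‖f₀ x‖ ≤ ‖f₀ (fun _ => (0 : Fin N))‖ + 1 := by
  set x₀ : CodeTree M N := fun _ => (0 : Fin N)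
  have h := hf₀.dist_le_mul x x₀
  rw [NNReal.coe_one, one_mul, Real.dist_eq] at h
  have h2 : dist x x₀ ≤ 1 := treeDist_le_one x x₀
  calc ‖f₀ x‖ = ‖f₀ x₀ + (f₀ x - f₀ x₀)‖ := by ring_nf
    _ ≤ ‖f₀ x₀‖ + ‖f₀ x - f₀ x₀‖ := norm_add_le _ _
    _ ≤ ‖f₀ x₀‖ + 1 := by
        apply add_le_add_right
        rw [Real.norm_eq_abs]
        exact le_trans h h2

lemma lipschitz_integrable [NeZero M] [Fact (2 ≤ M)] [NeZero N]
    (μ : Measure (CodeTree M N)) [IsProbabilityMeasure μ]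
    (f₀ : CodeTree M N → ℝ) (hf₀ : LipschitzWith 1 f₀) : Integrable f₀ μ :=
  (integrable_const (‖f₀ (fun _ => (0 : Fin N))‖ + 1)).mono'
    hf₀.continuous.measurable.aestronglyMeasurable
    (Filter.Eventually.of_forall (lipschitz_bounded f₀ hf₀))

lemma integral_approx [NeZero M] [Fact (2 ≤ M)] [NeZero N]
    (μ : Measure (CodeTree M N)) [IsProbabilityMeasure μ]
    (f₀ : CodeTree M N → ℝ) (hf₀ : LipschitzWith 1 f₀) (k : ℕ) :
    |∫ x, f₀ x ∂μ - ∑ c : FT M N k, f₀ (repP c) * (μ (cyl M N k (repP c))).toReal|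
      ≤ (1/(M:ℝ))^(k+1) := by
  have hM : 2 ≤ M := Fact.out
  set S : FT M N k → Set (CodeTree M N) := fun c => cyl M N k (repP c) with hS
  have hmeas : ∀ c, MeasurableSet (S c) := fun c => measurableSet_cyl hM k (repP c)
  have hdisj : Pairwise (Function.onFun Disjoint S) := by
    intro c c' hcc
    rw [Function.onFun, Set.disjoint_left]
    intro σ h1 h2
    apply hcc
    funext i
    have e1 : σ i.1 = c i := by rw [h1 i.1 i.2, repP_agree c i.1 i.2]
    have e2 : σ i.1 = c' i := by rw [h2 i.1 i.2, repP_agree c' i.1 i.2]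
    rw [← e1, ← e2]
  have hcover : (⋃ c, S c) = Set.univ := by
    rw [Set.eq_univ_iff_forall]
    intro σ
    rw [Set.mem_iUnion]
    refine ⟨fun i => σ i.1, fun i hi => ?_⟩
    rw [repP_agree _ i hi]
  have hint : Integrable f₀ μ := lipschitz_integrable μ f₀ hf₀
  have hsplit : ∫ x, f₀ x ∂μ = ∑ c : FT M N k, ∫ x in S c, f₀ x ∂μ := by
    rw [← setIntegral_univ, ← hcover, integral_iUnion hmeas hdisj hint.integrableOn,
      tsum_fintype]
  have hμsum : ∑ c : FT M N k, (μ (S c)).toReal = 1 := by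
    have h1 : μ (⋃ c, S c) = ∑' c, μ (S c) := measure_iUnion hdisj hmeas
    rw [hcover, measure_univ, tsum_fintype] at h1
    rw [← ENNReal.toReal_sum (fun c _ => measure_ne_top μ (S c)), ← h1]
    rfl
  have hterm : ∀ c : FT M N k,
      |∫ x in S c, f₀ x ∂μ - f₀ (repP c) * (μ (S c)).toReal|
        ≤ (1/(M:ℝ))^(k+1) * (μ (S c)).toReal := by
    intro c
    have heq : ∫ x in S c, f₀ x ∂μ - f₀ (repP c) * (μ (S c)).toReal
        = ∫ x in S c, (f₀ x - f₀ (repP c)) ∂μ := by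
      rw [integral_sub hint.integrableOn (integrableOn_const
        (measure_lt_top μ (S c)).ne), setIntegral_const, smul_eq_mul, mul_comm]
      rfl
    rw [heq, ← Real.norm_eq_abs]
    apply norm_setIntegral_le_of_norm_le_const_ae' (measure_lt_top μ (S c))
    · apply Filter.Eventually.of_forall
      intro x hx
      rw [Real.norm_eq_abs, ← Real.dist_eq]
      have h := hf₀.dist_le_mul x (repP c)
      rw [NNReal.coe_one, one_mul] at h
      refine le_trans h ?_
      rw [dist_eq_treeDist]
      apply treeDist_le_pow
      intro i hi
      rw [hx i hi]
  calc |∫ x, f₀ x ∂μ - ∑ c : FT M N k, f₀ (repP c) * (μ (cyl M N k (repP c))).toReal|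
      = |∑ c : FT M N k, (∫ x in S c, f₀ x ∂μ - f₀ (repP c) * (μ (S c)).toReal)| := by
        rw [hsplit, Finset.sum_sub_distrib]
    _ ≤ ∑ c : FT M N k, |∫ x in S c, f₀ x ∂μ - f₀ (repP c) * (μ (S c)).toReal| :=
        Finset.abs_sum_le_sum_abs _ _
    _ ≤ ∑ c : FT M N k, (1/(M:ℝ))^(k+1) * (μ (S c)).toReal :=
        Finset.sum_le_sum fun c _ => hterm c
    _ = (1/(M:ℝ))^(k+1) := by
        rw [← Finset.mul_sum, hμsum, mul_one]

end Aux12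

section Aux13

lemma le_rpow_quarter {x b : ℝ} (hb : 0 ≤ b) (h : b^4 ≤ x) :
    b ≤ x ^ ((1:ℝ)/4) := by
  have h1 : ((b^4 : ℝ)) ^ ((1:ℝ)/4) = b := by
    rw [← Real.rpow_natCast b 4, ← Real.rpow_mul hb]
    norm_num
  rw [← h1]
  exact Real.rpow_le_rpow (by positivity) h (by norm_num)

set_option maxHeartbeats 1000000 in
lemma arith_choice (M V : ℕ) (hM : 2 ≤ M) (hV : 1 ≤ V) :
    ∃ j : ℕ, (1/(M:ℝ))^(j+1)
        + (∑ l ∈ Finset.Icc 1 j, (1/(M:ℝ))^l * ((M:ℝ)^(2*l) * (1/(V:ℝ))))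
      ≤ 2 * ((M:ℝ)/(V:ℝ)) ^ ((1:ℝ)/4) := by
  have hM0 : (0:ℝ) < M := by positivity
  have hM2 : (2:ℝ) ≤ M := by exact_mod_cast hM
  have hM1 : (1:ℝ) < M := by linarith
  have hV0 : (0:ℝ) < V := by exact_mod_cast hV
  have hM1ne : (M:ℝ) - 1 ≠ 0 := by linarith
  by_cases hcase : (V:ℝ) ≤ 16 * (M:ℝ)^5
  · refine ⟨0, ?_⟩
    rw [Finset.Icc_eq_empty (by omega), Finset.sum_empty, add_zero, pow_one]
    have h4 : (1/(2*(M:ℝ)))^4 ≤ (M:ℝ)/(V:ℝ) := by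
      have he : (1/(2*(M:ℝ)))^4 = 1/(16*(M:ℝ)^4) := by ring
      rw [he, div_le_div_iff₀ (by positivity) hV0]
      nlinarith [pow_pos hM0 4]
    have := le_rpow_quarter (by positivity) h4
    calc 1/(M:ℝ) = 2 * (1/(2*(M:ℝ))) := by ring
      _ ≤ 2 * ((M:ℝ)/(V:ℝ)) ^ ((1:ℝ)/4) := by linarith
  · push_neg at hcase
    set x' : ℝ := Real.sqrt ((V:ℝ)/(M:ℝ)) with hx'
    have hx'0 : 0 < x' := Real.sqrt_pos.mpr (by positivity)
    have hx'1 : 1 ≤ x' := by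
      rw [hx', show (1:ℝ) = Real.sqrt 1 by simp]
      apply Real.sqrt_le_sqrt
      rw [le_div_iff₀ hM0]
      have hM5 : (M:ℝ) ≤ (M:ℝ)^5 := by
        calc (M:ℝ) = (M:ℝ)^1 := (pow_one _).symm
          _ ≤ (M:ℝ)^5 := pow_le_pow_right₀ (le_of_lt hM1) (by omega)
      nlinarith [pow_pos hM0 5]
    set n := ⌊x'⌋₊ with hn
    have hn1 : 1 ≤ n := Nat.le_floor (by exact_mod_cast hx'1)
    refine ⟨Nat.log M n + 1, ?_⟩
    set j := Nat.log M n + 1 with hj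
    have hMj_ge : x' ≤ (M:ℝ)^j := by
      have h1 : n < M^j := Nat.lt_pow_succ_log_self (by omega) n
      have h2 : x' < (n:ℝ) + 1 := Nat.lt_floor_add_one x'
      have h3 : ((n:ℝ)+1) ≤ (M:ℝ)^j := by exact_mod_cast h1
      linarith
    have hMj_le : (M:ℝ)^j ≤ (M:ℝ) * x' := by
      have h1 : M^(Nat.log M n) ≤ n := Nat.pow_log_le_self M (by omega)
      have h2 : ((n:ℝ)) ≤ x' := Nat.floor_le hx'0.le
      calc (M:ℝ)^j = M * (M:ℝ)^(Nat.log M n) := by rw [hj, pow_succ]; ring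
        _ ≤ M * n := by
            apply mul_le_mul_of_nonneg_left _ hM0.le
            exact_mod_cast h1
        _ ≤ M * x' := mul_le_mul_of_nonneg_left h2 hM0.le
    set r : ℝ := Real.sqrt ((M:ℝ)/(V:ℝ)) with hr
    have hr0 : 0 < r := Real.sqrt_pos.mpr (by positivity)
    have hrx : r * x' = 1 := by
      rw [hr, hx', ← Real.sqrt_mul (by positivity)]
      rw [show (M:ℝ)/V * (V/M) = 1 by field_simp]
      exact Real.sqrt_one
    have hx'sq : x' * x' = (V:ℝ)/(M:ℝ) := Real.mul_self_sqrt (by positivity)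
    have hxV : (V:ℝ) = M * (x' * x') := by
      rw [hx'sq]
      field_simp
    -- geometric sum bound
    have hterm : ∀ l : ℕ, (1/(M:ℝ))^l * ((M:ℝ)^(2*l) * (1/(V:ℝ))) = (M:ℝ)^l / V := by
      intro l
      rw [two_mul, pow_add, one_div, inv_pow, one_div]
      field_simp
    have hgeom : ∀ jj : ℕ, (∑ l ∈ Finset.Icc 1 jj, (M:ℝ)^l / V)
        ≤ (M:ℝ)^(jj+1) / (((M:ℝ)-1) * V) := by
      intro jj
      induction jj with
      | zero =>
        rw [Finset.Icc_eq_empty (by omega), Finset.sum_empty]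
        have hpos : (0:ℝ) < ((M:ℝ)-1) * V := by nlinarith
        positivity
      | succ jj ih =>
        rw [Finset.sum_Icc_succ_top (by omega : 1 ≤ jj + 1)]
        have he : (M:ℝ)^(jj+1) / (((M:ℝ)-1) * V) + (M:ℝ)^(jj+1) / V
            = (M:ℝ)^(jj+1+1) / (((M:ℝ)-1) * V) := by
          field_simp
          ring
        linarith [ih]
    calc (1/(M:ℝ))^(j+1)
          + (∑ l ∈ Finset.Icc 1 j, (1/(M:ℝ))^l * ((M:ℝ)^(2*l) * (1/(V:ℝ))))
        = 1/(M:ℝ)^(j+1) + (∑ l ∈ Finset.Icc 1 j, (M:ℝ)^l / V) := by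
          rw [one_div_pow, Finset.sum_congr rfl fun l _ => hterm l]
      _ ≤ 1/((M:ℝ) * x') + (M:ℝ)^(j+1) / (((M:ℝ)-1) * V) := by
          apply add_le_add _ (hgeom j)
          apply one_div_le_one_div_of_le (by positivity)
          have hps : (M:ℝ)^(j+1) = (M:ℝ)^j * M := pow_succ _ _
          nlinarith [hMj_ge, hM0, hx'0]
      _ ≤ 1/((M:ℝ) * x') + (M:ℝ) * ((M:ℝ) * x') / (((M:ℝ)-1) * V) := by
          apply add_le_add_right
          apply (div_le_div_iff_of_pos_right (by nlinarith : (0:ℝ) < ((M:ℝ)-1) * V)).mpr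
          have hps : (M:ℝ)^(j+1) = (M:ℝ)^j * M := pow_succ _ _
          nlinarith [hMj_le, hM0]
      _ = r/(M:ℝ) + (M:ℝ) * r / ((M:ℝ)-1) := by
          have e1 : 1/((M:ℝ) * x') = r/(M:ℝ) := by
            rw [div_eq_div_iff (mul_pos hM0 hx'0).ne' hM0.ne']
            calc (1:ℝ) * M = M * (r * x') := by rw [hrx]; ring
              _ = r * ((M:ℝ) * x') := by ring
          have e2 : (M:ℝ) * ((M:ℝ) * x') / (((M:ℝ)-1) * V) = (M:ℝ) * r / ((M:ℝ)-1) := by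
            have hrdef : r = 1/x' := by
              rw [eq_div_iff hx'0.ne']
              exact hrx
            rw [hrdef, hxV]
            field_simp
          rw [e1, e2]
      _ ≤ (5/2) * r := by
          have hMM : (M:ℝ)/((M:ℝ)-1) ≤ 2 := by
            rw [div_le_iff₀ (by linarith)]
            linarith
          have h1 : r/(M:ℝ) ≤ r/2 := by
            apply div_le_div_of_nonneg_left hr0.le (by norm_num) hM2
          have h2 : (M:ℝ) * r / ((M:ℝ)-1) ≤ 2 * r := by
            rw [div_le_iff₀ (by linarith)]
            nlinarith [hr0]
          linarith
      _ ≤ 2 * Real.sqrt r := by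
          have hr16 : r ≤ 1/16 := by
            have hMV : (M:ℝ)/(V:ℝ) ≤ 1/256 := by
              rw [div_le_div_iff₀ hV0 (by norm_num)]
              have h16 : (16:ℝ) ≤ (M:ℝ)^4 := by
                calc (16:ℝ) = 2^4 := by norm_num
                  _ ≤ (M:ℝ)^4 := pow_le_pow_left₀ (by norm_num) hM2 4
              nlinarith [pow_pos hM0 4, pow_pos hM0 5]
            calc r = Real.sqrt ((M:ℝ)/V) := hr
              _ ≤ Real.sqrt (1/256) := Real.sqrt_le_sqrt hMV
              _ = 1/16 := by
                  rw [show (1:ℝ)/256 = (1/16)^2 by norm_num, Real.sqrt_sq (by norm_num)]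
          have hsq : Real.sqrt r * Real.sqrt r = r := Real.mul_self_sqrt hr0.le
          have hsq4 : Real.sqrt r ≤ 1/4 := by
            calc Real.sqrt r ≤ Real.sqrt (1/16) := Real.sqrt_le_sqrt hr16
              _ = 1/4 := by
                  rw [show (1:ℝ)/16 = (1/4)^2 by norm_num, Real.sqrt_sq (by norm_num)]
          nlinarith [Real.sqrt_nonneg r]
      _ = 2 * ((M:ℝ)/(V:ℝ)) ^ ((1:ℝ)/4) := by
          congr 1
          rw [hr, Real.sqrt_eq_rpow, Real.sqrt_eq_rpow, ← Real.rpow_mul (by positivity)]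
          norm_num

end Aux13

/-- **`ρ_V` converges to `ρ`.** Let `μ_V` be the invariant measure of the IFS
`{Ω^V; η^a, P^a, a ∈ A}` and `ρ_V` its first marginal, and let `ρ` be the i.i.d. measure
on code trees.  If `M ≥ 2` then the Monge–Kantorovich distance satisfies
`d_P(ρ_V, ρ) ≤ 2 (M/V)^{1/4}`. -/
theorem stmt_14 {M N V : ℕ} [NeZero M] [NeZero V] (hM : 2 ≤ M) (hN : 0 < N)
    (P : Fin N → NNReal) (hP : ∑ n, P n = 1)
    (μV : Measure (Fin V → CodeTree M N)) (hμV : IsProbabilityMeasure μV)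
    (hμVinv : μV = ∑ a : IdxA M N V, probA P a • μV.map (eta a))
    (ρV : Measure (CodeTree M N)) (hρV : ρV = μV.map (fun ω => ω 0))
    (ρ : Measure (CodeTree M N)) (hρ : IsProbabilityMeasure ρ)
    (hρcyl : ∀ (τ : CodeTree M N) (k : ℕ),
      ρ {σ : CodeTree M N | ∀ i : List (Fin M), i.length ≤ k → σ i = τ i} = cylProb P k τ) :
    MKdist ρV ρ ≤ 2 * ((M : ℝ) / (V : ℝ)) ^ ((1 : ℝ) / 4) := by
  classical
  haveI : Fact (2 ≤ M) := ⟨hM⟩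
  haveI : NeZero N := ⟨by omega⟩
  haveI := hμV
  haveI : MeasureTheory.IsProbabilityMeasure ρV := by
    rw [hρV]
    exact MeasureTheory.Measure.isProbabilityMeasure_map (measurable_pi_apply 0).aemeasurable
  have hV1 : 1 ≤ V := Nat.one_le_iff_ne_zero.mpr (NeZero.ne V)
  have hP1 : ∑ y : Fin N, (P y : ℝ) = 1 := by
    exact_mod_cast congrArg NNReal.toReal hP
  have hRHS0 : (0:ℝ) ≤ 2 * ((M:ℝ)/(V:ℝ)) ^ ((1:ℝ)/4) := by positivity
  obtain ⟨j, hjle⟩ := arith_choice M V hM hV1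
  refine Real.iSup_le ?_ hRHS0
  rintro ⟨f₀, hf₀⟩
  have key : ∀ k : ℕ, j ≤ k →
      (∫ x, f₀ x ∂ρV) - (∫ x, f₀ x ∂ρ)
        ≤ 2 * (1/(M:ℝ))^(k+1) + ((1/(M:ℝ))^(j+1)
            + ∑ l ∈ Finset.Icc 1 j, (1/(M:ℝ))^l * ((M:ℝ)^(2*l) * (1/(V:ℝ)))) := by
    intro k hjk
    have hq : ∀ c : FT M N k, (ρV (cyl M N k (repP c))).toReal
        = ∑ Ns : NsT M N V k, ∑ Vs : VsT M V k,
            (∏ t, ∏ v, (P (Ns t v) : ℝ))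
              * (∏ _t : Fin (k+1), ∏ _p : Fin V × Fin M, (1/(V:ℝ)))
              * ind (∀ i, patK Ns Vs i = c i) := by
      intro c
      rw [hρV, MeasureTheory.Measure.map_apply (measurable_pi_apply 0)
        (measurableSet_cyl hM k (repP c))]
      exact muV_cyl_toReal P μV hμVinv k c
    have hp : ∀ c : FT M N k,
        (ρ (cyl M N k (repP c))).toReal = ∏ i : NodeT M k, (P (c i) : ℝ) := by
      intro c
      have h2 : ρ (cyl M N k (repP c)) = cylProb P k (repP c) := hρcyl (repP c) k
      rw [h2]
      exact rho_cyl_toReal P c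
    have hc := couple_bound (V := V) P hP1 f₀ hf₀ hjk
    have hA := integral_approx ρV f₀ hf₀ k
    have hB := integral_approx ρ f₀ hf₀ k
    have hmid : (∑ c : FT M N k, f₀ (repP c) * (ρV (cyl M N k (repP c))).toReal)
        - (∑ c : FT M N k, f₀ (repP c) * (ρ (cyl M N k (repP c))).toReal)
        ≤ (1/(M:ℝ))^(j+1)
            + ∑ l ∈ Finset.Icc 1 j, (1/(M:ℝ))^l * ((M:ℝ)^(2*l) * (1/(V:ℝ))) := by
      rw [← Finset.sum_sub_distrib]
      refine le_trans (le_of_eq (Finset.sum_congr rfl fun c _ => ?_)) hc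
      rw [hq c, hp c]
      ring
    obtain ⟨hA1, hA2⟩ := abs_le.mp hA
    obtain ⟨hB1, hB2⟩ := abs_le.mp hB
    linarith
  have hlim : (∫ x, f₀ x ∂ρV) - (∫ x, f₀ x ∂ρ)
      ≤ (1/(M:ℝ))^(j+1)
          + ∑ l ∈ Finset.Icc 1 j, (1/(M:ℝ))^l * ((M:ℝ)^(2*l) * (1/(V:ℝ))) := by
    apply le_of_forall_pos_le_add
    intro ε hε
    have hM1 : (1:ℝ)/(M:ℝ) < 1 := by
      rw [div_lt_one (by positivity)]
      exact_mod_cast lt_of_lt_of_le one_lt_two hM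
    obtain ⟨k0, hk0⟩ := exists_pow_lt_of_lt_one (by positivity : (0:ℝ) < ε/2) hM1
    have hkey := key (max k0 j) (le_max_right _ _)
    have hsmall : 2 * (1/(M:ℝ))^((max k0 j)+1) < ε := by
      have h1 : (1/(M:ℝ))^((max k0 j)+1) ≤ (1/(M:ℝ))^k0 := by
        apply pow_le_pow_of_le_one oneDivM_pos.le oneDivM_le_one
        omega
      calc 2 * (1/(M:ℝ))^((max k0 j)+1) ≤ 2 * (1/(M:ℝ))^k0 := by linarith
        _ < 2 * (ε/2) := by linarith
        _ = ε := by ring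
    linarith
  calc (∫ x, f₀ x ∂ρV) - (∫ x, f₀ x ∂ρ)
      ≤ (1/(M:ℝ))^(j+1)
          + ∑ l ∈ Finset.Icc 1 j, (1/(M:ℝ))^l * ((M:ℝ)^(2*l) * (1/(V:ℝ))) := hlim
    _ ≤ 2 * ((M:ℝ)/(V:ℝ)) ^ ((1:ℝ)/4) := hjle
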